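/- Let MΣ = (P, Σ, V, MV) be a CQ weakly acyclic materialized-view setting. Then for every ground instance I of P with V ⇒_{I,Σ} MV, there exists a view-verified universal solution J for MΣ and a homomorphism from J to I. -/

import Mathlib

namespace CertainViews

/-! ### Values, terms, schemas, instances -/

/-- Values: constants and labeled nulls. -/
inductive Val : Type
  | const : ℕ → Val
  | null : ℕ → Val
deriving DecidableEq

/-- A value is a constant. -/
def Val.IsConst (a : Val) : Prop := ∃ c, a = Val.const c

/-- Terms of queries and dependencies: query variables and constants. -/
inductive Term : Type
  | var : ℕ → Term
  | const : ℕ → Term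
deriving DecidableEq

/-- Evaluation of a term under an assignment of values to variables
(constants are fixed, as in homomorphisms/valuations). -/
def Term.eval (ν : ℕ → Val) : Term → Val
  | .var x => ν x
  | .const c => .const c

/-- A relational schema: a collection of relation symbols, each with a fixed arity. -/
structure Schema : Type 1 where
  rel : Type
  arity : rel → ℕ

variable {S : Schema}

/-- An instance of a schema assigns a relation (a set of tuples of values)
to each relation symbol. -/
structure Inst (S : Schema) : Type where
  rels : ∀ r : S.rel, Set (Fin (S.arity r) → Val)

/-- The facts of an instance, as a set of (relation symbol, tuple) pairs. -/
def Inst.facts (I : Inst S) : Set ((r : S.rel) × (Fin (S.arity r) → Val)) :=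
  { p | p.2 ∈ I.rels p.1 }

/-- The instance determined by a set of facts. -/
def Inst.ofFacts (F : Set ((r : S.rel) × (Fin (S.arity r) → Val))) : Inst S :=
  ⟨fun r => { t | (⟨r, t⟩ : (r : S.rel) × (Fin (S.arity r) → Val)) ∈ F }⟩

/-- A ground instance contains only constants. -/
def Inst.Ground (I : Inst S) : Prop :=
  ∀ r, ∀ t ∈ I.rels r, ∀ i, (t i).IsConst

/-- The active domain of an instance. -/
def Inst.adom (I : Inst S) : Set Val :=
  { a | ∃ p ∈ I.facts, ∃ i, p.2 i = a }

/-- Applying a mapping on values to all facts of an instance. -/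
def Inst.map (ρ : Val → Val) (I : Inst S) : Inst S :=
  Inst.ofFacts ((fun p : (r : S.rel) × (Fin (S.arity r) → Val) =>
    (⟨p.1, fun i => ρ (p.2 i)⟩ : (r : S.rel) × (Fin (S.arity r) → Val))) '' I.facts)

/-- A homomorphism between instances: a mapping of values fixing constants
that sends facts to facts. -/
def InstHom (J I : Inst S) : Prop :=
  ∃ ρ : Val → Val, (∀ c, ρ (Val.const c) = Val.const c) ∧
    ∀ p ∈ J.facts, (⟨p.1, fun i => ρ (p.2 i)⟩ : (r : S.rel) × (Fin (S.arity r) → Val)) ∈ I.facts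

/-! ### Atoms, conjunctive queries -/

/-- A relational atom over a schema. -/
structure Atom (S : Schema) : Type where
  rel : S.rel
  args : Fin (S.arity rel) → Term

/-- Applying a term mapping to an atom. -/
def Atom.mapTerms (f : Term → Term) (A : Atom S) : Atom S :=
  ⟨A.rel, fun i => f (A.args i)⟩

/-- The variables occurring in a list of atoms. -/
def BodyVars (B : List (Atom S)) : Set ℕ :=
  { x | ∃ A ∈ B, ∃ j, A.args j = Term.var x }

/-- A conjunction of atoms holds in an instance under a valuation. -/
def BodyHolds (ν : ℕ → Val) (B : List (Atom S)) (I : Inst S) : Prop :=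
  ∀ A ∈ B, (fun i => (A.args i).eval ν) ∈ I.rels A.rel

/-- The set of facts obtained by applying a valuation to a list of atoms. -/
def factSet (B : List (Atom S)) (ν : ℕ → Val) : Set ((r : S.rel) × (Fin (S.arity r) → Val)) :=
  { p | ∃ A ∈ B, p = ⟨A.rel, fun i => (A.args i).eval ν⟩ }

/-- A conjunctive query (`CQ` query) of arity `k`: a head vector of terms
and a body that is a finite conjunction of relational atoms. -/
structure CQ (S : Schema) (k : ℕ) : Type where
  head : Fin k → Term
  body : List (Atom S)

/-- Safety of a CQ query: the body is nonempty and every head variable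
occurs in the body. -/
def CQ.Safe {k : ℕ} (Q : CQ S k) : Prop :=
  Q.body ≠ [] ∧ ∀ x, (∃ i, Q.head i = Term.var x) → ∃ A ∈ Q.body, ∃ j, A.args j = Term.var x

/-- The answer to a CQ query on an instance: images of the head vector
under all valuations from the body to the instance. -/
def CQ.answer {k : ℕ} (Q : CQ S k) (I : Inst S) : Set (Fin k → Val) :=
  { t | ∃ ν : ℕ → Val, BodyHolds ν Q.body I ∧ t = fun i => (Q.head i).eval ν }

/-- The constants occurring in a CQ query. -/
def CQ.consts {k : ℕ} (Q : CQ S k) : Set ℕ :=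
  { c | (∃ i, Q.head i = Term.const c) ∨ ∃ A ∈ Q.body, ∃ j, A.args j = Term.const c }

/-- A query of arity `k` in an arbitrary query language, identified with its semantics. -/
def GenQuery (S : Schema) (k : ℕ) : Type := Inst S → Set (Fin k → Val)

/-- The tuple of constants corresponding to a tuple of natural numbers. -/
def constTuple {k : ℕ} (t : Fin k → ℕ) : Fin k → Val := fun i => Val.const (t i)


/-! ### Embedded dependencies: tgds and egds -/

/-- A tuple-generating dependency (tgd)
`∀ x̄ ȳ (φ(x̄,ȳ) → ∃ z̄ ψ(x̄,z̄))`: the body is `φ`; the head is `ψ`; the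
existential variables are the head variables not occurring in the body. -/
structure TGD (S : Schema) : Type where
  body : List (Atom S)
  head : List (Atom S)

/-- Satisfaction of a tgd in an instance. -/
def TGD.holds (σ : TGD S) (I : Inst S) : Prop :=
  ∀ ν : ℕ → Val, BodyHolds ν σ.body I →
    ∃ ν' : ℕ → Val, (∀ x ∈ BodyVars σ.body, ν' x = ν x) ∧ BodyHolds ν' σ.head I

/-- An equality-generating dependency (egd) `∀ x̄ (φ(x̄) → x₁ = x₂)`. -/
structure EGD (S : Schema) : Type where
  body : List (Atom S)
  lhs : ℕ
  rhs : ℕ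

/-- Satisfaction of an egd in an instance. -/
def EGD.holds (σ : EGD S) (I : Inst S) : Prop :=
  ∀ ν : ℕ → Val, BodyHolds ν σ.body I → ν σ.lhs = ν σ.rhs

/-- An embedded dependency: a tgd or an egd. -/
inductive Dep (S : Schema) : Type
  | tgd : TGD S → Dep S
  | egd : EGD S → Dep S

def Dep.holds : Dep S → Inst S → Prop
  | .tgd σ, I => σ.holds I
  | .egd σ, I => σ.holds I

/-- An instance satisfies a set of dependencies. -/
def Inst.satisfiesAll (I : Inst S) (D : Set (Dep S)) : Prop := ∀ d ∈ D, d.holds I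

/-- An atom contains no constants. -/
def Atom.ConstantFree (A : Atom S) : Prop := ∀ i, ∃ x, A.args i = Term.var x

/-- A dependency without constants. -/
def Dep.ConstantFree : Dep S → Prop
  | .tgd σ => (∀ A ∈ σ.body, A.ConstantFree) ∧ (∀ A ∈ σ.head, A.ConstantFree)
  | .egd σ => ∀ A ∈ σ.body, A.ConstantFree

/-! ### Weak acyclicity -/

/-- A position of a schema: a relation symbol together with an attribute index. -/
def Pos (S : Schema) : Type := S.rel × ℕ

/-- Variable `x` occurs in the list of atoms `B` at position `p`. -/
def OccursAt (B : List (Atom S)) (x : ℕ) (p : Pos S) : Prop :=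
  ∃ A ∈ B, A.rel = p.1 ∧ ∃ i : Fin (S.arity A.rel), (i : ℕ) = p.2 ∧ A.args i = Term.var x

/-- Regular edge of the dependency graph, induced by a tgd. -/
def TGD.RegularEdge (σ : TGD S) (p q : Pos S) : Prop :=
  ∃ x, OccursAt σ.body x p ∧ x ∈ BodyVars σ.head ∧ OccursAt σ.head x q

/-- Special edge of the dependency graph, induced by a tgd. -/
def TGD.SpecialEdge (σ : TGD S) (p q : Pos S) : Prop :=
  ∃ x y, OccursAt σ.body x p ∧ x ∈ BodyVars σ.head ∧
    y ∈ BodyVars σ.head ∧ y ∉ BodyVars σ.body ∧ OccursAt σ.head y q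

/-- An edge (regular or special) of the dependency graph of a set of dependencies. -/
def DepEdge (D : Set (Dep S)) (p q : Pos S) : Prop :=
  ∃ σ : TGD S, Dep.tgd σ ∈ D ∧ (σ.RegularEdge p q ∨ σ.SpecialEdge p q)

/-- A set of tgds and egds is weakly acyclic iff the dependency graph of its
tgds has no cycle going through a special edge. -/
def WeaklyAcyclic (D : Set (Dep S)) : Prop :=
  ¬ ∃ (σ : TGD S) (p q : Pos S), Dep.tgd σ ∈ D ∧ σ.SpecialEdge p q ∧
      Relation.ReflTransGen (DepEdge D) q p



/-! ### Views and materialized-view settings -/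

/-- A finite set of views over a schema `S`: view names with arities,
each defined by a (safe) CQ query over `S`. -/
structure Views (S : Schema) : Type 1 where
  idx : Type
  finite : Finite idx
  arity : idx → ℕ
  defn : ∀ v : idx, CQ S (arity v)
  safe : ∀ v, (defn v).Safe

/-- The view schema determined by a set of views. -/
def Views.schema {S : Schema} (V : Views S) : Schema := ⟨V.idx, V.arity⟩

/-- The image of an instance under a set of views: the instance of the view
schema assigning to each view the answer of its defining query. -/
def Views.image {S : Schema} (V : Views S) (I : Inst S) : Inst V.schema :=
  ⟨fun v => (V.defn v).answer I⟩

/-- The fixed part of a materialized-view setting: a schema `P`, a finite set `Σ`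
of embedded dependencies without constants on `P`, and a set `V` of CQ views on `P`. -/
structure Frame : Type 1 where
  S : Schema
  deps : Set (Dep S)
  depsFinite : deps.Finite
  depsConstantFree : ∀ d ∈ deps, d.ConstantFree
  views : Views S

/-- A (CQ) materialized-view setting `MΣ = (P, Σ, V, MV)`:
a frame together with a finite ground instance `MV` of the view schema. -/
structure MVSetting : Type 1 extends Frame where
  mv : Inst views.schema
  mvGround : mv.Ground
  mvFinite : mv.facts.Finite

/-- `V ⇒_{I,Σ} MV`: the ground instance `I` is a `Σ`-valid base instance
for `V` and `MV` (closed-world assumption). -/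
def MVSetting.ValidBase (M : MVSetting) (I : Inst M.S) : Prop :=
  I.Ground ∧ I.satisfiesAll M.deps ∧ ∀ v, (M.views.defn v).answer I = M.mv.rels v

/-- A materialized-view setting is valid iff some `Σ`-valid base instance exists. -/
def MVSetting.Valid (M : MVSetting) : Prop := ∃ I, M.ValidBase I

/-- The set of certain answers of a query w.r.t. a materialized-view setting. -/
def MVSetting.certain (M : MVSetting) {k : ℕ} (Q : GenQuery M.S k) : Set (Fin k → Val) :=
  { t | ∀ I, M.ValidBase I → t ∈ Q I }

/-- `consts(MΣ)`: the constants occurring in `MV` or in the view definitions. -/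
def MVSetting.consts (M : MVSetting) : Set ℕ :=
  { c | (∃ p ∈ M.mv.facts, ∃ i, p.2 i = Val.const c) ∨ ∃ v, c ∈ (M.views.defn v).consts }

/-- `MΣ`-conditional containment of queries: `Q₁(I) ⊆ Q₂(I)` for every
`Σ`-valid base instance `I` for `V` and `MV`. -/
def MVSetting.CondContained (M : MVSetting) {k : ℕ} (Q1 Q2 : GenQuery M.S k) : Prop :=
  ∀ I, M.ValidBase I → Q1 I ⊆ Q2 I

/-- The expansion query `Q₁(t̄) ← C^exp_MV`, where `C^exp_MV` is the expansion of
`MV` over the base schema: each fact of `MV` is replaced by the body of the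
corresponding view definition, with head variables bound to the constants of the
fact and with nonhead variables renamed apart across the facts.  Since the
variables are renamed apart, its answer on an instance `I` is `{t̄}` exactly
when every fact of `MV` is an answer to the corresponding view on `I`
(and is empty otherwise). -/
def MVSetting.expansionQuery (M : MVSetting) {k : ℕ} (t : Fin k → ℕ) : GenQuery M.S k :=
  fun I => { u | u = constTuple t ∧ ∀ v, M.mv.rels v ⊆ (M.views.defn v).answer I }


/-! ### Rewritings in terms of the views -/

/-- Substitution of terms for variables in a term. -/
def Term.subst (h : ℕ → Term) : Term → Term
  | .var x => h x
  | .const c => .const c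

/-- The term corresponding to a value (constants to constants, nulls to variables). -/
def Val.toTerm : Val → Term
  | .const c => .const c
  | .null n => .var n

/-- `R^exp` exists and is the query `E` over the base schema:
an expansion of a rewriting `R` over the view schema is a query `E` whose
answer on every base instance is the answer of `R` on the view image. -/
def IsExpansion {S : Schema} (V : Views S) {k : ℕ} (R : GenQuery V.schema k)
    (E : GenQuery S k) : Prop :=
  ∀ I, E I = R (V.image I)

/-- The expansion `R^exp` over the base schema of a CQ rewriting `R` over the views
of a setting, given by its semantics `R^exp(I) = R(I^{(+V)})`. -/
def MVSetting.expQuery (M : MVSetting) {k : ℕ} (R : CQ M.views.schema k) : GenQuery M.S k :=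
  fun I => R.answer (M.views.image I)

/-- `R ⊑_{Σ,MV,V} Q`: the rewriting `R` is `Σ`-conditionally contained in `Q`
w.r.t. `MV` and modulo `V`, i.e., `R^exp(I) ⊆ Q(I)` for every `Σ`-valid base
instance `I` for `V` and `MV`. -/
def MVSetting.RewContained (M : MVSetting) {k : ℕ} (R : CQ M.views.schema k)
    (Q : GenQuery M.S k) : Prop :=
  ∀ I, M.ValidBase I → M.expQuery R I ⊆ Q I

/-- A head-instantiated rewriting for a ground tuple `t̄`: a safe CQ query over the
view schema with head vector `t̄`, obtained from some safe CQ query with a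
constant-free head vector by instantiating its head variables to constants
(mapping all remaining terms to themselves). -/
def IsHeadInstantiated (M : MVSetting) {k : ℕ} (t : Fin k → ℕ)
    (R : CQ M.views.schema k) : Prop :=
  R.Safe ∧ (∀ i, R.head i = Term.const (t i)) ∧
  ∃ Rg : CQ M.views.schema k, Rg.Safe ∧ (∀ i, ∃ x, Rg.head i = Term.var x) ∧
    ∃ h : ℕ → Term,
      (∀ x, (∃ i, Rg.head i = Term.var x) → ∃ c, h x = Term.const c) ∧
      (∀ x, (¬ ∃ i, Rg.head i = Term.var x) → h x = Term.var x) ∧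
      R.head = (fun i => (Rg.head i).subst h) ∧
      R.body = Rg.body.map (Atom.mapTerms (Term.subst h))

/-- A rewriting `R` is `MV`-validated iff its answer on `MV` is nonempty. -/
def MVValidated (M : MVSetting) {k : ℕ} (R : CQ M.views.schema k) : Prop :=
  (R.answer M.mv).Nonempty

/-- The atom over the view schema corresponding to a fact of `MV`. -/
def MVSetting.factAtom (M : MVSetting) (v : M.views.idx)
    (tv : Fin (M.views.arity v) → Val) : Atom M.views.schema :=
  ⟨v, fun i => (tv i).toTerm⟩

/-- An `MV`-induced rewriting for `t̄`: a CQ rewriting with head vector `t̄`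
each of whose subgoals is a fact of `MV`. -/
def IsMVInduced (M : MVSetting) {k : ℕ} (t : Fin k → ℕ) (R : CQ M.views.schema k) : Prop :=
  (∀ i, R.head i = Term.const (t i)) ∧
  ∀ A ∈ R.body, ∃ v, ∃ tv ∈ M.mv.rels v, A = M.factAtom v tv

/-- A maximal `MV`-induced rewriting for `t̄`: an `MV`-induced rewriting for `t̄`
having every fact of `MV` as a subgoal. -/
def IsMaxMVInduced (M : MVSetting) {k : ℕ} (t : Fin k → ℕ) (R : CQ M.views.schema k) : Prop :=
  IsMVInduced M t R ∧ ∀ v, ∀ tv ∈ M.mv.rels v, M.factAtom v tv ∈ R.body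


/-! ### Data exchange: canonical solutions and instance chase -/

/-- The solutions of the data-exchange setting `S^{(de)}(MΣ) = (V, P, Σ_st ∪ Σ)`
associated with a setting `MΣ`, for the source instance `MV`: a target instance `J`
such that `(MV, J)` satisfies the source-to-target tgds
`V(x̄) → ∃ȳ body_V(x̄,ȳ)` (for each view `V`) and the target dependencies `Σ`. -/
def MVSetting.DESolution (M : MVSetting) (J : Inst M.S) : Prop :=
  J.satisfiesAll M.deps ∧ ∀ v, M.mv.rels v ⊆ (M.views.defn v).answer J

/-- A (standard) instance-chase step with a tgd: an applicable trigger whose head is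
added with fresh distinct nulls for the existential variables. -/
def tgdStep {S : Schema} (σ : TGD S) (J J' : Inst S) : Prop :=
  ∃ h : ℕ → Val, BodyHolds h σ.body J ∧
    ¬ (∃ g : ℕ → Val, (∀ x ∈ BodyVars σ.body, g x = h x) ∧ BodyHolds g σ.head J) ∧
    ∃ h' : ℕ → Val, (∀ x ∈ BodyVars σ.body, h' x = h x) ∧
      (∀ x ∈ BodyVars σ.head, x ∉ BodyVars σ.body →
        (∃ n, h' x = Val.null n) ∧ h' x ∉ J.adom) ∧
      Set.InjOn h' { x | x ∈ BodyVars σ.head ∧ x ∉ BodyVars σ.body } ∧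
      J' = Inst.ofFacts (J.facts ∪ factSet σ.head h')

/-- A successful instance-chase step with an egd: a violating trigger in which at
least one of the two values is a null, which is then replaced by the other value. -/
def egdStepOk {S : Schema} (σ : EGD S) (J J' : Inst S) : Prop :=
  ∃ h : ℕ → Val, BodyHolds h σ.body J ∧ h σ.lhs ≠ h σ.rhs ∧
    (((∃ n, h σ.lhs = Val.null n) ∧
        J' = J.map (fun a => if a = h σ.lhs then h σ.rhs else a)) ∨
     ((∃ n, h σ.rhs = Val.null n) ∧
        J' = J.map (fun a => if a = h σ.rhs then h σ.lhs else a)))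

/-- A failing instance-chase step with an egd: a violating trigger equating two
distinct constants. -/
def egdStepFail {S : Schema} (σ : EGD S) (J : Inst S) : Prop :=
  ∃ h : ℕ → Val, BodyHolds h σ.body J ∧ h σ.lhs ≠ h σ.rhs ∧
    (h σ.lhs).IsConst ∧ (h σ.rhs).IsConst

/-- A successful chase step with some dependency of a set. -/
def depStepTo {S : Schema} (D : Set (Dep S)) (J J' : Inst S) : Prop :=
  (∃ σ : TGD S, Dep.tgd σ ∈ D ∧ tgdStep σ J J') ∨
  (∃ σ : EGD S, Dep.egd σ ∈ D ∧ egdStepOk σ J J')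

/-- `J` is a (terminal) result of chasing `J0` with the dependencies `D`. -/
def ChaseResult {S : Schema} (D : Set (Dep S)) (J0 J : Inst S) : Prop :=
  Relation.ReflTransGen (depStepTo D) J0 J ∧ J.satisfiesAll D

/-- The result of chasing the source instance `MV` with the source-to-target tgds
`Σ_st` of the associated data-exchange setting: for each fact `t ∈ MV[V]`, the body
of the view definition of `V` is added, with the head variables bound to `t` and
with fresh, globally distinct nulls for the nonhead variables. -/
def MVSetting.IsPreSolution (M : MVSetting) (J : Inst M.S) : Prop :=
  ∃ ν : (v : M.views.idx) → (Fin (M.views.arity v) → Val) → ℕ → Val,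
    (∀ v, ∀ t ∈ M.mv.rels v, ∀ i, ((M.views.defn v).head i).eval (ν v t) = t i) ∧
    (∀ v, ∀ t ∈ M.mv.rels v, ∀ x ∈ BodyVars (M.views.defn v).body,
      (¬ ∃ i, (M.views.defn v).head i = Term.var x) → ∃ n, ν v t x = Val.null n) ∧
    (∀ v v' t t' x x', t ∈ M.mv.rels v → t' ∈ M.mv.rels v' →
      x ∈ BodyVars (M.views.defn v).body →
      (¬ ∃ i, (M.views.defn v).head i = Term.var x) →
      x' ∈ BodyVars (M.views.defn v').body →
      (¬ ∃ i, (M.views.defn v').head i = Term.var x') →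
      ν v t x = ν v' t' x' → v = v' ∧ HEq t t' ∧ x = x') ∧
    J.facts = ⋃ v, ⋃ t ∈ M.mv.rels v, factSet (M.views.defn v).body (ν v t)

/-- `J_de^{MΣ}`: a canonical universal solution for the source instance `MV` in the
data-exchange setting associated with `MΣ`, i.e., a terminal result of chasing `MV`
with `Σ_st ∪ Σ`. -/
def MVSetting.IsCanonicalSolution (M : MVSetting) (J : Inst M.S) : Prop :=
  ∃ J0, M.IsPreSolution J0 ∧ ChaseResult M.deps J0 J

/-! ### MV-enhanced chase (view-verified data exchange) -/

/-- Applying, to an instance, the conjunction of equalities forcing the values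
`vals j` to become the values `tgt j` (a disjunct of an `MV`-induced disjunctive
egd): succeeds iff there is a substitution fixing the constants and all other
values that realizes the equalities. -/
def substResult {S : Schema} (J J' : Inst S) {k : ℕ} (vals tgt : Fin k → Val) : Prop :=
  ∃ ρ : Val → Val, (∀ c, ρ (Val.const c) = Val.const c) ∧
    (∀ a, (∀ j, a ≠ vals j) → ρ a = a) ∧ (∀ j, ρ (vals j) = tgt j) ∧ J' = J.map ρ

/-- The values of the head vector of a CQ under a valuation. -/
def headVals {S : Schema} {k : ℕ} (Q : CQ S k) (h : ℕ → Val) : Fin k → Val :=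
  fun i => (Q.head i).eval h

/-- The set of results of one chase step with the `MV`-induced generalized egd of a
view `v` on an instance `J` (with trigger `h`): one (successful) result for each
tuple of `MV[v]`, or the empty instance `ε` (here: `none`) if all disjuncts fail. -/
def MVSetting.gedResults (M : MVSetting) (v : M.views.idx) (J : Inst M.S)
    (h : ℕ → Val) : Set (Option (Inst M.S)) :=
  { o | (∃ t ∈ M.mv.rels v, ∃ J', o = some J' ∧
           substResult J J' (headVals (M.views.defn v) h) t)
      ∨ (o = none ∧ ∀ t ∈ M.mv.rels v,
           ¬ ∃ J', substResult J J' (headVals (M.views.defn v) h) t) }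

/-- The step system of the `MV`-enhanced chase with `Σ ∪ Σ^{(MΣ)}` on instances:
to each node (an instance, or the empty instance `ε` = `none`) it assigns the
possible chase steps, each step being the set of its results.  The steps are:
chase steps with the tgds and egds of `Σ`; steps with the `MV`-induced implication
constraint `body_V → false` of each view `V` with `MV[V] = ∅`; and steps with the
`MV`-induced disjunctive egd `body_V(x̄,ȳ) → ⋁_i (x̄ = t̄ᵢ)` of each view `V` of
positive arity with `MV[V] ≠ ∅`. -/
def MVSetting.mvChaseSteps (M : MVSetting) :
    Option (Inst M.S) → Set (Set (Option (Inst M.S)))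
  | none => ∅
  | some J =>
    { C | (∃ σ : TGD M.S, Dep.tgd σ ∈ M.deps ∧ ∃ J', tgdStep σ J J' ∧ C = {some J'})
        ∨ (∃ σ : EGD M.S, Dep.egd σ ∈ M.deps ∧ ∃ J', egdStepOk σ J J' ∧ C = {some J'})
        ∨ (∃ σ : EGD M.S, Dep.egd σ ∈ M.deps ∧ egdStepFail σ J ∧
             C = {(none : Option (Inst M.S))})
        ∨ (∃ v, M.mv.rels v = ∅ ∧ (∃ h, BodyHolds h (M.views.defn v).body J) ∧
             C = {(none : Option (Inst M.S))})
        ∨ (∃ v, (M.mv.rels v).Nonempty ∧ 1 ≤ M.views.arity v ∧ ∃ h : ℕ → Val,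
             BodyHolds h (M.views.defn v).body J ∧
             (∀ t ∈ M.mv.rels v, ∃ i, headVals (M.views.defn v) h i ≠ t i) ∧
             C = M.gedResults v J h) }

/-- One edge of the MV-enhanced chase: passing from a node to one of the results of
an applicable chase step. -/
def MVSetting.mvStep (M : MVSetting) (a b : Option (Inst M.S)) : Prop :=
  ∃ C ∈ M.mvChaseSteps a, b ∈ C

/-- Reachability along MV-enhanced chase steps. -/
def MVSetting.mvReach (M : MVSetting) : Option (Inst M.S) → Option (Inst M.S) → Prop :=
  Relation.ReflTransGen M.mvStep

/-- A view-verified universal solution for `MΣ`: a nonempty leaf of a (finite)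
MV-enhanced chase of a canonical universal solution `J_de^{MΣ}` with
`Σ ∪ Σ^{(MΣ)}`, i.e., a terminal nonempty instance reachable from `J_de^{MΣ}`. -/
def MVSetting.IsVVSolution (M : MVSetting) (J : Inst M.S) : Prop :=
  ∃ Jde, M.IsCanonicalSolution Jde ∧ M.mvReach (some Jde) (some J) ∧
    M.mvChaseSteps (some J) = ∅

/-- A grounded version of an instance `J`: the result of consistently replacing all
its nulls with distinct new constants (avoiding the constants in `avoid`). -/
def GroundedVersion {S : Schema} (avoid : Set ℕ) (J J' : Inst S) : Prop :=
  ∃ ρ : Val → Val, (∀ c, ρ (Val.const c) = Val.const c) ∧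
    (∀ n, ∃ c, ρ (Val.null n) = Val.const c ∧ c ∉ avoid ∧ Val.const c ∉ J.adom) ∧
    Set.InjOn ρ J.adom ∧ J' = J.map ρ

/-- Chains of a given length for a binary relation. -/
def chainOfLength {α : Type*} (R : α → α → Prop) : ℕ → α → α → Prop
  | 0, a, b => a = b
  | n + 1, a, b => ∃ c, R a c ∧ chainOfLength R n c b


/-! ### Finitely-branching rooted trees, for chase trees -/

/-- Finite rooted trees with labels in `β`. -/
inductive RTree (β : Type) : Type
  | node : β → List (RTree β) → RTree β

namespace RTree

variable {β : Type}

/-- The label of the root. -/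
def label : RTree β → β
  | .node b _ => b

mutual
  /-- The depth of a tree (a single node has depth 1). -/
  def depth : RTree β → ℕ
    | .node _ ts => depthL ts + 1
  def depthL : List (RTree β) → ℕ
    | [] => 0
    | t :: ts => max (depth t) (depthL ts)
end

mutual
  /-- The number of leaves of a tree. -/
  def leafCount : RTree β → ℕ
    | .node _ [] => 1
    | .node _ (t :: ts) => leafCount t + leafCountL ts
  def leafCountL : List (RTree β) → ℕ
    | [] => 0
    | t :: ts => leafCount t + leafCountL ts
end

mutual
  /-- The list of labels of the leaves of a tree. -/
  def leaves : RTree β → List β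
    | .node b [] => [b]
    | .node _ (t :: ts) => leaves t ++ leavesL ts
  def leavesL : List (RTree β) → List β
    | [] => []
    | t :: ts => leaves t ++ leavesL ts
end

/-- The labels of a list of trees, as a set. -/
def labelsOf (ts : List (RTree β)) : Set β := { b | ∃ t ∈ ts, label t = b }

mutual
  /-- A chase tree for a disjunctive-step system `D` (assigning to each node label
  the set of possible chase steps, each step given by the set of its results):
  each inner node's children are exactly the results of one applicable chase step,
  and leaves are exactly the nodes to which no chase step applies. -/
  def Valid (D : β → Set (Set β)) : RTree β → Prop
    | .node b ts => (D b = ∅ ∧ ts = []) ∨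
        (∃ C ∈ D b, labelsOf ts = C ∧ ValidL D ts)
  def ValidL (D : β → Set (Set β)) : List (RTree β) → Prop
    | [] => True
    | t :: ts => Valid D t ∧ ValidL D ts
end

end RTree





/-! ### CQ queries with disequalities and unions thereof -/

/-- A `CQ^≠` query: a CQ query whose body may also contain disequality atoms. -/
structure CQNeq (S : Schema) (k : ℕ) : Type where
  head : Fin k → Term
  body : List (Atom S)
  diseqs : List (Term × Term)

/-- The answer to a `CQ^≠` query on an instance (via valuations: homomorphisms
from the relational atoms that satisfy all the disequalities). -/
def CQNeq.answer {k : ℕ} (Q : CQNeq S k) (I : Inst S) : Set (Fin k → Val) :=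
  { t | ∃ ν : ℕ → Val, BodyHolds ν Q.body I ∧
      (∀ p ∈ Q.diseqs, p.1.eval ν ≠ p.2.eval ν) ∧ t = fun i => (Q.head i).eval ν }

/-- The answer to a `UCQ^≠` query (a finite set of `CQ^≠` components; the
trivial query `[]` has empty answer on every instance). -/
def ucqAnswer {k : ℕ} (R : List (CQNeq S k)) (I : Inst S) : Set (Fin k → Val) :=
  { t | ∃ q ∈ R, t ∈ q.answer I }

/-- The terms occurring in a `CQ^≠` query. -/
def CQNeq.terms {k : ℕ} (Q : CQNeq S k) : Set Term :=
  { u | (∃ i, Q.head i = u) ∨ (∃ A ∈ Q.body, ∃ j, A.args j = u) ∨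
        (∃ p ∈ Q.diseqs, p.1 = u ∨ p.2 = u) }

/-- Applying a term mapping to a `CQ^≠` query. -/
def CQNeq.mapTerms {k : ℕ} (θ : Term → Term) (Q : CQNeq S k) : CQNeq S k :=
  ⟨fun i => θ (Q.head i), Q.body.map (Atom.mapTerms θ), Q.diseqs.map fun p => (θ p.1, θ p.2)⟩

/-- The query has the disequality atom `a ≠ b` (in either orientation). -/
def CQNeq.hasDiseq {k : ℕ} (Q : CQNeq S k) (a b : Term) : Prop :=
  (a, b) ∈ Q.diseqs ∨ (b, a) ∈ Q.diseqs

/-- A homomorphism (on the query level) from a conjunction of atoms into the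
body of a `CQ^≠` query. -/
def homTo {k : ℕ} (h : ℕ → Term) (B : List (Atom S)) (Q : CQNeq S k) : Prop :=
  ∀ A ∈ B, A.mapTerms (Term.subst h) ∈ Q.body

/-- The size of an atom. -/
def Atom.size (A : Atom S) : ℕ := 1 + S.arity A.rel

/-- The size of a CQ query. -/
def CQSize {k : ℕ} (_head : Fin k → Term) (body : List (Atom S)) : ℕ :=
  k + (body.map Atom.size).sum

def CQ.size {k : ℕ} (Q : CQ S k) : ℕ := CQSize Q.head Q.body
def CQNeq.size {k : ℕ} (Q : CQNeq S k) : ℕ := CQSize Q.head Q.body + Q.diseqs.length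

/-! ### Normalization of conjunctions of atoms -/

/-- The original (renamed-apart) copy of a term: variable `x` becomes `2x`,
so that the fresh variables introduced by normalization (odd numbers) are new. -/
def Term.orig : Term → Term
  | .var x => .var (2 * x)
  | .const c => .const c

/-- The original (renamed) copy of an atom. -/
def Atom.orig (A : Atom S) : Atom S := A.mapTerms Term.orig

/-- The argument list of an atom. -/
def Atom.argsList (A : Atom S) : List Term := List.ofFn A.args

/-- The term in position `(j, i)` of a list of atoms, if any. -/
def atomArg? (B : List (Atom S)) (j i : ℕ) : Option Term :=
  match B[j]? with
  | none => none
  | some A => A.argsList[i]?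

/-- Whether the occurrence at position `(j, i)` is a duplicate occurrence,
i.e., the same variable or constant already occurs at an earlier position. -/
def isDup (B : List (Atom S)) (j i : ℕ) : Bool :=
  match atomArg? B j i with
  | none => false
  | some u =>
      (List.range B.length).any fun j' =>
        match B[j']? with
        | none => false
        | some A' =>
            (List.range A'.argsList.length).any fun i' =>
              (decide (j' < j) || (decide (j' = j) && decide (i' < i))) &&
              decide (A'.argsList[i']? = some u)

/-- The fresh variable replacing the duplicate occurrence at position `(j, i)`. -/
def freshVar (j i : ℕ) : Term := Term.var (2 * Nat.pair j i + 1)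

/-- The normalized copy of the atom at index `j` of `B`: each duplicate occurrence
of a variable or constant is replaced by a fresh distinct variable. -/
def normAtom (B : List (Atom S)) (j : ℕ) (A : Atom S) : Atom S :=
  ⟨A.rel, fun i => if isDup B j (i : ℕ) then freshVar j (i : ℕ) else (A.args i).orig⟩

/-- `ℛ(φ⁽ⁿ⁾)`: the relational part of the normalized version of a conjunction of
atoms. -/
def normBody (B : List (Atom S)) : List (Atom S) :=
  B.zipIdx.map fun p => normAtom B p.2 p.1

/-- `ℰ(φ⁽ⁿ⁾)`: the equality atoms of the normalized version, equating each fresh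
variable with the term it replaced. -/
def normEqs (B : List (Atom S)) : List (Term × Term) :=
  (B.zipIdx.map fun p =>
    p.1.argsList.zipIdx.filterMap fun q =>
      if isDup B p.2 q.2 then some (freshVar p.2 q.2, q.1.orig) else none).flatten


/-! ### Generalized dependencies and the chase of `CQ^≠` queries with `Υ_{MΣ}` -/

/-- A disjunct of the consequent of a generalized dependency: an existentially
quantified conjunction of relational atoms, a conjunction of equalities, or a
single disequality.  (`false`, as in generalized implication constraints, is
represented by the absence of disjuncts.) -/
inductive GDisj (S : Schema) : Type
  | exAtoms : List (Atom S) → GDisj S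
  | eqs : List (Term × Term) → GDisj S
  | neq : Term → Term → GDisj S

/-- A generalized dependency: an antecedent (a conjunction of relational atoms)
and a finite disjunction of disjuncts. -/
structure GDep (S : Schema) : Type where
  ante : List (Atom S)
  disjs : List (GDisj S)

variable {S : Schema} {k : ℕ}

/-- Two terms are unequal for trivial reasons (distinct constants). -/
def diseqTaut (a b : Term) : Prop :=
  ∃ c d, a = Term.const c ∧ b = Term.const d ∧ c ≠ d

/-- A disjunct is already satisfied (is a tautology) in a `CQ^≠` query under a
trigger `h` (with `av` the variables of the antecedent). -/
def disjSat (Q : CQNeq S k) (h : ℕ → Term) (av : Set ℕ) : GDisj S → Prop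
  | .exAtoms ψ => ∃ h' : ℕ → Term, (∀ x ∈ av, h' x = h x) ∧
      ∀ A ∈ ψ, A.mapTerms (Term.subst h') ∈ Q.body
  | .eqs L => ∀ p ∈ L, p.1.subst h = p.2.subst h
  | .neq a b => diseqTaut (a.subst h) (b.subst h) ∨ Q.hasDiseq (a.subst h) (b.subst h)

/-- The result of a chase step on a `CQ^≠` query with an equality conjunct:
the query is rewritten by a substitution that realizes all the equalities,
fixes the constants, and is the identity outside the terms being equated.
The step requires that none of the equated pairs be disequated in the query. -/
def eqsChild (Q : CQNeq S k) (h : ℕ → Term) (L : List (Term × Term)) (Q' : CQNeq S k) : Prop :=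
  (∀ p ∈ L, ¬ Q.hasDiseq (p.1.subst h) (p.2.subst h)) ∧
  ∃ θ : Term → Term, (∀ c, θ (Term.const c) = Term.const c) ∧
    (∀ u, (∀ p ∈ L, u ≠ p.1.subst h ∧ u ≠ p.2.subst h) → θ u = u) ∧
    (∀ p ∈ L, θ (p.1.subst h) = θ (p.2.subst h)) ∧
    (∀ u, θ u = u ∨ ∃ p ∈ L, θ u = θ (p.1.subst h)) ∧
    Q' = Q.mapTerms θ

/-- A chase step with an equality conjunct fails (e.g., it equates distinct
constants, or terms that are explicitly disequated in the query). -/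
def eqsFails (Q : CQNeq S k) (h : ℕ → Term) (L : List (Term × Term)) : Prop :=
  ¬ ∃ Q', eqsChild Q h L Q'

/-- The result of a chase step with a disequality disjunct: the disequality is
added to the query. -/
def neqChild (Q : CQNeq S k) (h : ℕ → Term) (a b : Term) (Q' : CQNeq S k) : Prop :=
  a.subst h ≠ b.subst h ∧
  Q' = ⟨Q.head, Q.body, Q.diseqs ++ [(a.subst h, b.subst h)]⟩

/-- A chase step with a disequality disjunct fails: the two sides are the same
variable or the same constant. -/
def neqFails (_Q : CQNeq S k) (h : ℕ → Term) (a b : Term) : Prop :=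
  a.subst h = b.subst h

/-- The result of a chase step with an existential-atoms disjunct: the image of the
atoms is conjoined to the body, with fresh distinct variables for the
existential variables. -/
def exAtomsChild (Q : CQNeq S k) (h : ℕ → Term) (av : Set ℕ) (ψ : List (Atom S))
    (Q' : CQNeq S k) : Prop :=
  ∃ h' : ℕ → Term, (∀ x ∈ av, h' x = h x) ∧
    (∀ x ∈ BodyVars ψ, x ∉ av → ∃ y, h' x = Term.var y ∧ Term.var y ∉ Q.terms) ∧
    Set.InjOn h' { x | x ∈ BodyVars ψ ∧ x ∉ av } ∧
    Q' = ⟨Q.head, Q.body ++ ψ.map (Atom.mapTerms (Term.subst h')), Q.diseqs⟩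

/-- The (successful) results of applying one disjunct in a chase step. -/
def disjChild (Q : CQNeq S k) (h : ℕ → Term) (av : Set ℕ) :
    GDisj S → Set (Option (CQNeq S k))
  | .exAtoms ψ => { o | ∃ Q', o = some Q' ∧ exAtomsChild Q h av ψ Q' }
  | .eqs L => { o | ∃ Q', o = some Q' ∧ eqsChild Q h L Q' }
  | .neq a b => { o | ∃ Q', o = some Q' ∧ neqChild Q h a b Q' }

/-- Whether applying a disjunct in a chase step fails. -/
def disjFails (Q : CQNeq S k) (h : ℕ → Term) : GDisj S → Prop
  | .exAtoms _ => False
  | .eqs L => eqsFails Q h L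
  | .neq a b => neqFails Q h a b

/-- The set of results of one chase step with a generalized dependency `g` on a
`CQ^≠` query `Q` with trigger `h`: the successful results of the disjuncts, or
the trivial query `ε` (= `none`) if all disjuncts fail. -/
def gdepResults (g : GDep S) (Q : CQNeq S k) (h : ℕ → Term) : Set (Option (CQNeq S k)) :=
  { o | (∃ d ∈ g.disjs, o ∈ disjChild Q h (BodyVars g.ante) d)
      ∨ (o = none ∧ ∀ d ∈ g.disjs, disjFails Q h d) }

/-- The possible chase steps with a generalized dependency on a `CQ^≠` query:
a trigger from the antecedent into the body such that no disjunct is already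
satisfied, together with the resulting set of children. -/
def gdepSteps (g : GDep S) (Q : CQNeq S k) : Set (Set (Option (CQNeq S k))) :=
  { C | ∃ h : ℕ → Term, homTo h g.ante Q ∧
      (∀ d ∈ g.disjs, ¬ disjSat Q h (BodyVars g.ante) d) ∧ C = gdepResults g Q h }

/-- The `≠`-transformation `σ_(≠)` of a tgd `σ : φ → ∃z̄ ψ`:
`ℛ(φ⁽ⁿ⁾) → (∃z̄ ψ) ∨ ¬ℰ(φ⁽ⁿ⁾)`. -/
def TGD.neqT (σ : TGD S) : GDep S :=
  ⟨normBody σ.body,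
   GDisj.exAtoms (σ.head.map Atom.orig) :: (normEqs σ.body).map fun p => GDisj.neq p.1 p.2⟩

/-- The `≠`-transformation `σ_(≠)` of an egd `σ : φ → x₁ = x₂`:
`ℛ(φ⁽ⁿ⁾) → (x₁ = x₂) ∨ ¬ℰ(φ⁽ⁿ⁾)`. -/
def EGD.neqT (σ : EGD S) : GDep S :=
  ⟨normBody σ.body,
   GDisj.eqs [((Term.var σ.lhs).orig, (Term.var σ.rhs).orig)] ::
     (normEqs σ.body).map fun p => GDisj.neq p.1 p.2⟩

/-- The `MV`-induced generalized implication constraint `ι_V` of a view `V` with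
`MV[V] = ∅`:  `ℛ(φ⁽ⁿ⁾) → false ∨ ¬ℰ(φ⁽ⁿ⁾)`. -/
def MVSetting.gicDep (M : MVSetting) (v : M.views.idx) : GDep M.S :=
  ⟨normBody (M.views.defn v).body,
   (normEqs (M.views.defn v).body).map fun p => GDisj.neq p.1 p.2⟩

/-- The equalities `x̄ = t̄` between the (normalized) head vector of a view and a
tuple of `MV`. -/
def MVSetting.gnegdPairs (M : MVSetting) (v : M.views.idx)
    (t : Fin (M.views.arity v) → Val) : List (Term × Term) :=
  List.ofFn fun i => (((M.views.defn v).head i).orig, (t i).toTerm)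

/-- The possible chase steps with the `MV`-induced generalized negd `τ_V` of a view
`V` of positive arity with `MV[V] ≠ ∅`:
`ℛ(φ⁽ⁿ⁾) → ⋁_{i} (x̄ = t̄ᵢ) ∨ ¬ℰ(φ⁽ⁿ⁾)`, one equality disjunct per tuple of
`MV[V]`. -/
def MVSetting.gnegdSteps (M : MVSetting) {k : ℕ} (v : M.views.idx) (Q : CQNeq M.S k) :
    Set (Set (Option (CQNeq M.S k))) :=
  { C | (M.mv.rels v).Nonempty ∧ 1 ≤ M.views.arity v ∧
      ∃ h : ℕ → Term, homTo h (normBody (M.views.defn v).body) Q ∧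
        (∀ t ∈ M.mv.rels v,
          ¬ disjSat Q h (BodyVars (normBody (M.views.defn v).body)) (GDisj.eqs (M.gnegdPairs v t))) ∧
        (∀ p ∈ normEqs (M.views.defn v).body,
          ¬ disjSat Q h (BodyVars (normBody (M.views.defn v).body)) (GDisj.neq p.1 p.2)) ∧
        C = { o | (∃ t ∈ M.mv.rels v,
                    o ∈ disjChild Q h (BodyVars (normBody (M.views.defn v).body))
                        (GDisj.eqs (M.gnegdPairs v t)))
               ∨ (∃ p ∈ normEqs (M.views.defn v).body,
                    o ∈ disjChild Q h (BodyVars (normBody (M.views.defn v).body))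
                        (GDisj.neq p.1 p.2))
               ∨ (o = none ∧
                    (∀ t ∈ M.mv.rels v, disjFails Q h (GDisj.eqs (M.gnegdPairs v t))) ∧
                    (∀ p ∈ normEqs (M.views.defn v).body, disjFails Q h (GDisj.neq p.1 p.2))) } }

/-- The step system of the chase of `CQ^≠` queries with the dependencies
`Υ_{MΣ} = Φ_(MV) ∪ Σ_(≠)`: steps with the `≠`-transformations of the tgds and
egds of `Σ`, with the `MV`-induced generalized implication constraints, and with
the `MV`-induced generalized negds.  (`none` is the node `ε`.) -/
def MVSetting.qSteps (M : MVSetting) (k : ℕ) :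
    Option (CQNeq M.S k) → Set (Set (Option (CQNeq M.S k)))
  | none => ∅
  | some Q =>
    { C | (∃ σ : TGD M.S, Dep.tgd σ ∈ M.deps ∧ C ∈ gdepSteps σ.neqT Q)
        ∨ (∃ σ : EGD M.S, Dep.egd σ ∈ M.deps ∧ C ∈ gdepSteps σ.neqT Q)
        ∨ (∃ v, M.mv.rels v = ∅ ∧ C ∈ gdepSteps (M.gicDep v) Q)
        ∨ (∃ v, C ∈ M.gnegdSteps v Q) }

/-- One edge of the chase of `CQ^≠` queries with `Υ_{MΣ}`. -/
def MVSetting.qStep (M : MVSetting) (k : ℕ) (a b : Option (CQNeq M.S k)) : Prop :=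
  ∃ C ∈ M.qSteps k a, b ∈ C

/-- The `MΣ`-expansion `Q'` of a CQ query `Q`: the `CQ^≠` query (without
disequalities) obtained by conjoining the body of `Q` with `C^exp_MV`, the
expansion of `MV` over the base schema, in which all the variables of
`C^exp_MV` have been renamed apart from those of `Q` (the head variables of
each view definition being bound to the constants of the corresponding fact
of `MV`, and its nonhead variables being mapped to globally distinct fresh
variables). -/
def MVSetting.IsMSExpansion (M : MVSetting) {k : ℕ} (Q : CQ M.S k) (Q' : CQNeq M.S k) : Prop :=
  Q'.head = Q.head ∧ Q'.diseqs = [] ∧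
  ∃ ν : (v : M.views.idx) → (Fin (M.views.arity v) → Val) → ℕ → Term,
    (∀ v, ∀ t ∈ M.mv.rels v, ∀ i,
      ((M.views.defn v).head i).subst (ν v t) = (t i).toTerm) ∧
    (∀ v, ∀ t ∈ M.mv.rels v, ∀ x ∈ BodyVars (M.views.defn v).body,
      (¬ ∃ i, (M.views.defn v).head i = Term.var x) →
      ∃ y, ν v t x = Term.var y ∧
        (∀ i, Q.head i ≠ Term.var y) ∧ ¬ ∃ A ∈ Q.body, ∃ j, A.args j = Term.var y) ∧
    (∀ v v' t t' x x', t ∈ M.mv.rels v → t' ∈ M.mv.rels v' →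
      x ∈ BodyVars (M.views.defn v).body →
      (¬ ∃ i, (M.views.defn v).head i = Term.var x) →
      x' ∈ BodyVars (M.views.defn v').body →
      (¬ ∃ i, (M.views.defn v').head i = Term.var x') →
      ν v t x = ν v' t' x' → v = v' ∧ HEq t t' ∧ x = x') ∧
    { A | A ∈ Q'.body } =
      { A | A ∈ Q.body } ∪
      { A | ∃ v, ∃ t ∈ M.mv.rels v, ∃ A0 ∈ (M.views.defn v).body,
              A = A0.mapTerms (Term.subst (ν v t)) }

/-- `R` is a chase result `(Q)^{MΣ}` of the `CQ^≠` query `Q0` with `Υ_{MΣ}`: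
the `UCQ^≠` query whose components are the non-`ε` leaves of a (finite) chase
tree for `MΣ` and `Q0`. -/
def MVSetting.IsChaseResult (M : MVSetting) {k : ℕ} (Q0 : CQNeq M.S k)
    (R : List (CQNeq M.S k)) : Prop :=
  ∃ T : RTree (Option (CQNeq M.S k)), T.label = some Q0 ∧
    RTree.Valid (M.qSteps k) T ∧ R = T.leaves.filterMap id


/-! ### Complexity: polynomial time, `Π^p_2`, and concrete problem encodings -/

/-- A polynomial-time computable function on natural numbers (under the standard
binary encoding), via Mathlib's Turing-machine model. -/
def PTimeFun (f : ℕ → ℕ) : Prop :=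
  Nonempty (Turing.TM2ComputableInPolyTime
    Computability.encodingNatBool.encode Computability.encodingNatBool.encode f)

/-- Pairing of three inputs into one. -/
def tripleCode (x y z : ℕ) : ℕ := Nat.pair x (Nat.pair y z)

/-- Membership in `Π^p_2` (the second level of the polynomial hierarchy) of a
language of (binary-encoded) natural numbers: a `∀∃` certificate characterization
with polynomial certificate bounds and a polynomial-time verifier. -/
def InPi2P (L : Set ℕ) : Prop :=
  ∃ (c : ℕ) (f : ℕ → ℕ), PTimeFun f ∧
    ∀ x, x ∈ L ↔ ∀ y, Nat.size y ≤ (Nat.size x + 1) ^ c →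
      ∃ z, Nat.size z ≤ (Nat.size x + 1) ^ c ∧ f (tripleCode x y z) = 1

/-- Polynomial-time many-one reducibility. -/
def PolyReduces (A B : Set ℕ) : Prop :=
  ∃ f : ℕ → ℕ, PTimeFun f ∧ ∀ x, x ∈ A ↔ f x ∈ B

/-- `Π^p_2`-hardness of a language. -/
def Pi2PHard (L : Set ℕ) : Prop := ∀ A, InPi2P A → PolyReduces A L

instance : Encodable Term :=
  Encodable.ofEquiv (ℕ ⊕ ℕ)
    { toFun := fun t => match t with | .var x => .inl x | .const c => .inr c
      invFun := fun s => match s with | .inl x => .var x | .inr c => .const c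
      left_inv := fun t => by cases t <;> rfl
      right_inv := fun s => by cases s <;> rfl }

/-- A concrete schema: relation symbols `0, …, m-1` with given arities. -/
structure CSchema : Type where
  m : ℕ
  ar : Fin m → ℕ

/-- The schema denoted by a concrete schema. -/
abbrev CSchema.toSchema (C : CSchema) : Schema := ⟨Fin C.m, C.ar⟩

/-- A concrete finite set of views over a concrete schema:
view names `0, …, l-1` with arities, defined by safe CQ queries. -/
structure CViews (C : CSchema) : Type where
  l : ℕ
  var : Fin l → ℕ
  defn : ∀ v : Fin l, CQ C.toSchema (var v)
  safe : ∀ v, (defn v).Safe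

/-- The set of views denoted by a concrete set of views. -/
def CViews.toViews {C : CSchema} (W : CViews C) : Views C.toSchema :=
  ⟨Fin W.l, inferInstance, W.var, W.defn, W.safe⟩

/-- The concrete syntax of an atom over a concrete schema. -/
def Atom.syn {C : CSchema} (A : Atom C.toSchema) : ℕ × List Term :=
  (A.rel.val, List.ofFn A.args)

/-- The concrete syntax of a CQ query over a concrete schema. -/
def CQ.syn {C : CSchema} {k : ℕ} (Q : CQ C.toSchema k) : List Term × List (ℕ × List Term) :=
  (List.ofFn Q.head, Q.body.map Atom.syn)

/-- The ground instance of the view schema denoted by a concrete list of view facts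
(each a view index together with a list of constants). -/
def mvDen {C : CSchema} (W : CViews C) (L : List (ℕ × List ℕ)) : Inst W.toViews.schema :=
  ⟨fun v => { t | ∃ e ∈ L, e.1 = v.val ∧ ∃ hl : e.2.length = W.var v,
      t = fun i => Val.const (e.2.get (Fin.cast hl.symm i)) }⟩

/-- The certain-query-answer problem, as a language: the fixed parts are a schema,
a set of dependencies, and the view definitions; the input is (an encoding of) a
CQ query `Q`, a ground tuple `t̄` of length equal to the arity of `Q`, and a set of
view answers `MV`, and the yes-instances are those in which `t̄` is a certain
answer to `Q` w.r.t. the setting `(P, Σ, V, MV)`. -/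
def certLang (C : CSchema) (W : CViews C) (ds : Set (Dep C.toSchema))
    (h1 : ds.Finite) (h2 : ∀ d ∈ ds, d.ConstantFree) : Set ℕ :=
  { n | ∃ (k : ℕ) (Q : CQ C.toSchema k) (t : Fin k → ℕ) (L : List (ℕ × List ℕ)),
      n = Encodable.encode (Q.syn, List.ofFn t, L) ∧ Q.Safe ∧
      ∃ (hg : (mvDen W L).Ground) (hf : (mvDen W L).facts.Finite),
        constTuple t ∈
          (MVSetting.mk (Frame.mk C.toSchema ds h1 h2 W.toViews) (mvDen W L) hg hf).certain
            Q.answer }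

/-- The `MΣ`-conditional-containment problem, as a language: the fixed parts are a
schema, a set of dependencies, and the view definitions; the input is (an encoding
of) two CQ queries `Q₁, Q₂` of the same arity and a set of view answers `MV`, and
the yes-instances are those in which `Q₁ ⊑_{MΣ} Q₂` for the setting
`(P, Σ, V, MV)`. -/
def contLang (C : CSchema) (W : CViews C) (ds : Set (Dep C.toSchema))
    (h1 : ds.Finite) (h2 : ∀ d ∈ ds, d.ConstantFree) : Set ℕ :=
  { n | ∃ (k : ℕ) (Q1 Q2 : CQ C.toSchema k) (L : List (ℕ × List ℕ)),
      n = Encodable.encode (Q1.syn, Q2.syn, L) ∧ Q1.Safe ∧ Q2.Safe ∧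
      ∃ (hg : (mvDen W L).Ground) (hf : (mvDen W L).facts.Finite),
        (MVSetting.mk (Frame.mk C.toSchema ds h1 h2 W.toViews) (mvDen W L) hg hf).CondContained
          Q1.answer Q2.answer }


/-! ### Auxiliary development for Statement 17 -/

section VVBasics
open Classical
variable {S : Schema}

lemma facts_ofFacts (F : Set ((r : S.rel) × (Fin (S.arity r) → Val))) :
    (Inst.ofFacts F).facts = F := rfl

lemma term_eval_comp {ρ : Val → Val} (hc : ∀ c, ρ (Val.const c) = Val.const c)
    (h : ℕ → Val) (u : Term) : u.eval (fun x => ρ (h x)) = ρ (u.eval h) := by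
  cases u <;> simp [Term.eval, hc]

lemma bodyHolds_transfer {J I : Inst S} {ρ : Val → Val}
    (hc : ∀ c, ρ (Val.const c) = Val.const c)
    (hf : ∀ p ∈ J.facts,
      (⟨p.1, fun i => ρ (p.2 i)⟩ : (r : S.rel) × (Fin (S.arity r) → Val)) ∈ I.facts)
    {h : ℕ → Val} {B : List (Atom S)} (hb : BodyHolds h B J) :
    BodyHolds (fun x => ρ (h x)) B I := by
  intro A hA
  have h1 := hf ⟨A.rel, fun i => (A.args i).eval h⟩ (hb A hA)
  have he : (fun i => (A.args i).eval (fun x => ρ (h x))) = fun i => ρ ((A.args i).eval h) := by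
    funext i; exact term_eval_comp hc h _
  rw [he]; exact h1

lemma bodyHolds_congr {J : Inst S} {B : List (Atom S)} {ν₁ ν₂ : ℕ → Val}
    (hagree : ∀ x ∈ BodyVars B, ν₁ x = ν₂ x) (hb : BodyHolds ν₁ B J) : BodyHolds ν₂ B J := by
  intro A hA
  have : (fun i => (A.args i).eval ν₂) = fun i => (A.args i).eval ν₁ := by
    funext i
    cases hu : A.args i with
    | const c => simp [Term.eval]
    | var x => simp only [Term.eval]; exact (hagree x ⟨A, hA, i, hu⟩).symm
  rw [this]; exact hb A hA

lemma val_mem_adom {J : Inst S} {h : ℕ → Val} {B : List (Atom S)} (hb : BodyHolds h B J)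
    {x : ℕ} (hx : x ∈ BodyVars B) : h x ∈ J.adom := by
  obtain ⟨A, hA, j, hj⟩ := hx
  exact ⟨⟨A.rel, fun i => (A.args i).eval h⟩, hb A hA, j, by simp [hj, Term.eval]⟩

lemma bodyHolds_mono {J J' : Inst S} (hsub : J.facts ⊆ J'.facts) {h : ℕ → Val}
    {B : List (Atom S)} (hb : BodyHolds h B J) : BodyHolds h B J' := by
  intro A hA
  exact hsub (show (⟨A.rel, fun i => (A.args i).eval h⟩ :
    (r : S.rel) × (Fin (S.arity r) → Val)) ∈ J.facts from hb A hA)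

lemma facts_map (ρ : Val → Val) (J : Inst S) :
    (J.map ρ).facts =
      (fun q : (r : S.rel) × (Fin (S.arity r) → Val) =>
        (⟨q.1, fun i => ρ (q.2 i)⟩ : (r : S.rel) × (Fin (S.arity r) → Val))) '' J.facts := rfl

lemma mem_facts_map {J : Inst S} {ρ : Val → Val} {q} (hq : q ∈ J.facts) :
    (⟨q.1, fun i => ρ (q.2 i)⟩ : (r : S.rel) × (Fin (S.arity r) → Val)) ∈ (J.map ρ).facts := by
  rw [facts_map]; exact ⟨q, hq, rfl⟩

lemma adom_map_subset {J : Inst S} {ρ : Val → Val} :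
    (J.map ρ).adom ⊆ ρ '' J.adom := by
  rintro a ⟨p, hp, i, hi⟩
  rw [facts_map] at hp
  obtain ⟨q, hq, rfl⟩ := hp
  exact ⟨q.2 i, ⟨q, hq, i, rfl⟩, hi⟩

lemma adom_ofFacts_union {J : Inst S} {F : Set ((r : S.rel) × (Fin (S.arity r) → Val))} :
    (Inst.ofFacts (J.facts ∪ F)).adom ⊆ J.adom ∪ {a | ∃ p ∈ F, ∃ i, p.2 i = a} := by
  rintro a ⟨p, hp, i, hi⟩
  rcases hp with hp | hp
  exacts [Or.inl ⟨p, hp, i, hi⟩, Or.inr ⟨p, hp, i, hi⟩]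

lemma factSet_finite (B : List (Atom S)) (h : ℕ → Val) : (factSet B h).Finite := by
  have hs : factSet B h ⊆ (fun A : Atom S =>
      (⟨A.rel, fun i => (A.args i).eval h⟩ : (r : S.rel) × (Fin (S.arity r) → Val))) ''
        {A | A ∈ B} := by
    rintro p ⟨A, hA, rfl⟩; exact ⟨A, hA, rfl⟩
  exact (B.finite_toSet.image _).subset hs

lemma adom_finite {J : Inst S} (hf : J.facts.Finite) : J.adom.Finite := by
  have hs : J.adom ⊆ ⋃ p ∈ J.facts, Set.range p.2 := by
    rintro a ⟨p, hp, i, hi⟩; exact Set.mem_biUnion hp ⟨i, hi⟩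
  exact (hf.biUnion fun p _ => Set.finite_range _).subset hs

lemma bodyVars_finite (B : List (Atom S)) : (BodyVars B).Finite := by
  have hs : BodyVars B ⊆ ⋃ A ∈ {A | A ∈ B},
      Set.range (fun i => match A.args i with | Term.var x => x | Term.const _ => 0) := by
    rintro x ⟨A, hA, j, hj⟩
    exact Set.mem_biUnion hA ⟨j, by simp [hj]⟩
  exact (B.finite_toSet.biUnion fun _ _ => Set.finite_range _).subset hs

lemma val_cases (v : Val) : (∃ n, v = Val.null n) ∨ ∃ c, v = Val.const c := by
  cases v
  exacts [Or.inr ⟨_, rfl⟩, Or.inl ⟨_, rfl⟩]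

lemma exists_null_bound {A : Set Val} (hA : A.Finite) : ∃ U, ∀ n, U ≤ n → Val.null n ∉ A := by
  have hinj : Set.InjOn Val.null (Val.null ⁻¹' A) := by
    intro a _ b _ h; cases h; rfl
  have h : {n | Val.null n ∈ A}.Finite := hA.preimage hinj
  obtain ⟨b, hb⟩ := h.bddAbove
  exact ⟨b + 1, fun n hn hmem => by
    have := hb hmem; omega⟩

lemma funSpace_finite {A : Set ℕ} {W : Set Val} (hA : A.Finite) (hW : W.Finite) (c : Val) :
    {s : ℕ → Val | (∀ x ∈ A, s x ∈ W) ∧ ∀ x, x ∉ A → s x = c}.Finite := by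
  haveI := hA.to_subtype
  haveI := hW.to_subtype
  have h1 : {f : A → Val | ∀ x : A, f x ∈ W}.Finite := by
    have he : {f : A → Val | ∀ x : A, f x ∈ W} =
        Set.range (fun g : A → W => fun x => (g x : Val)) := by
      ext f
      constructor
      · intro hf; exact ⟨fun x => ⟨f x, hf x⟩, rfl⟩
      · rintro ⟨g, rfl⟩ x; exact (g x).2
    rw [he]; exact Set.finite_range _
  apply Set.Finite.of_finite_image (f := fun (s : ℕ → Val) (x : A) => s (x : ℕ))
  · apply h1.subset
    rintro _ ⟨s, hs, rfl⟩ x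
    exact hs.1 x x.2
  · intro s₁ h₁ s₂ h₂ heq
    funext x
    by_cases hx : x ∈ A
    · exact congrFun heq ⟨x, hx⟩
    · rw [h₁.2 x hx, h₂.2 x hx]

end VVBasics

section VVRank
open Classical
variable {S : Schema} (D : Set (Dep S))

/-- Special edge of the dependency graph of `D`. -/
def SEdge (p q : Pos S) : Prop := ∃ σ : TGD S, Dep.tgd σ ∈ D ∧ σ.SpecialEdge p q

lemma sedge_depEdge {p q : Pos S} (h : SEdge D p q) : DepEdge D p q := by
  obtain ⟨σ, hσ, hs⟩ := h; exact ⟨σ, hσ, Or.inr hs⟩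

/-- There is a path in the dependency graph ending at `p` with at least `n` special edges. -/
def CountPath : ℕ → Pos S → Prop
  | 0, _ => True
  | n+1, p => ∃ a b, CountPath n a ∧ SEdge D a b ∧ Relation.ReflTransGen (DepEdge D) b p

lemma countPath_step {p q : Pos S} (h : DepEdge D p q) :
    ∀ {n}, CountPath D n p → CountPath D n q := by
  intro n hc
  cases n with
  | zero => trivial
  | succ n =>
    obtain ⟨a, b, h1, h2, h3⟩ := hc
    exact ⟨a, b, h1, h2, h3.tail h⟩

lemma countPath_sedge {p q : Pos S} (h : SEdge D p q) {n} (hc : CountPath D n p) :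
    CountPath D (n+1) q := ⟨p, q, hc, h, Relation.ReflTransGen.refl⟩

/-- Positions which are targets of special edges. -/
def STargets : Set (Pos S) := {q | ∃ p, SEdge D p q}

lemma tgds_finite (hD : D.Finite) : {σ : TGD S | Dep.tgd σ ∈ D}.Finite := by
  have hinj : Set.InjOn Dep.tgd (Dep.tgd ⁻¹' D) := by
    intro a _ b _ h; cases h; rfl
  exact hD.preimage hinj

lemma sTargets_finite (hD : D.Finite) : (STargets D).Finite := by
  have hs : STargets D ⊆ ⋃ σ ∈ {σ : TGD S | Dep.tgd σ ∈ D}, ⋃ A ∈ {A | A ∈ σ.head},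
      Set.range (fun i : Fin (S.arity A.rel) => ((A.rel, (i : ℕ)) : Pos S)) := by
    rintro q ⟨p, σ, hσ, x, y, _, _, _, _, hOcc⟩
    obtain ⟨A, hA, hrel, i, hi, _⟩ := hOcc
    refine Set.mem_biUnion hσ (Set.mem_biUnion hA ⟨i, ?_⟩)
    apply Prod.ext
    · exact hrel
    · exact hi
  exact ((tgds_finite D hD).biUnion fun σ _ =>
    (σ.head.finite_toSet.biUnion fun A _ => Set.finite_range _)).subset hs

lemma countPath_chain {n : ℕ} {p : Pos S} (h : CountPath D n p) :
    ∃ g : Fin n → Pos S, (∀ i, g i ∈ STargets D) ∧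
      (∀ i j : Fin n, (i : ℕ) < (j : ℕ) →
        ∃ a, Relation.ReflTransGen (DepEdge D) (g i) a ∧ SEdge D a (g j)) ∧
      (∀ i, Relation.ReflTransGen (DepEdge D) (g i) p) := by
  induction n generalizing p with
  | zero => exact ⟨fun i => i.elim0, fun i => i.elim0, fun i => i.elim0, fun i => i.elim0⟩
  | succ n ih =>
    obtain ⟨a, b, hc, hse, hrt⟩ := h
    obtain ⟨g, hT, hchain, hreach⟩ := ih hc
    refine ⟨Fin.snoc g b, ?_, ?_, ?_⟩
    · intro i
      rcases Fin.eq_castSucc_or_eq_last i with ⟨i', rfl⟩ | rfl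
      · rw [Fin.snoc_castSucc]; exact hT i'
      · rw [Fin.snoc_last]; exact ⟨a, hse⟩
    · intro i j hij
      rcases Fin.eq_castSucc_or_eq_last j with ⟨j', rfl⟩ | rfl
      · rcases Fin.eq_castSucc_or_eq_last i with ⟨i', rfl⟩ | rfl
        · rw [Fin.snoc_castSucc, Fin.snoc_castSucc]
          apply hchain
          simpa using hij
        · exfalso
          have := j'.isLt
          simp [Fin.last] at hij
          omega
      · rcases Fin.eq_castSucc_or_eq_last i with ⟨i', rfl⟩ | rfl
        · rw [Fin.snoc_castSucc, Fin.snoc_last]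
          exact ⟨a, hreach _, hse⟩
        · exfalso; simp at hij
    · intro i
      rcases Fin.eq_castSucc_or_eq_last i with ⟨i', rfl⟩ | rfl
      · rw [Fin.snoc_castSucc]
        exact ((hreach i').tail (sedge_depEdge D hse)).trans hrt
      · rw [Fin.snoc_last]; exact hrt

lemma countPath_bound (hD : D.Finite) (hwa : WeaklyAcyclic D) :
    ∃ N, ∀ (p : Pos S) (n : ℕ), CountPath D n p → n ≤ N := by
  haveI : Finite (STargets D) := (sTargets_finite D hD).to_subtype
  refine ⟨Nat.card (STargets D), fun p n h => ?_⟩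
  obtain ⟨g, hT, hchain, _⟩ := countPath_chain D h
  have hginj : Function.Injective (fun i : Fin n => (⟨g i, hT i⟩ : STargets D)) := by
    intro i j hij
    simp only [Subtype.mk.injEq] at hij
    by_contra hne
    rcases Nat.lt_or_ge (i : ℕ) (j : ℕ) with hlt | hge
    · obtain ⟨c, hrt, hse⟩ := hchain i j hlt
      obtain ⟨σ, hσ, hsp⟩ := hse
      rw [hij] at hrt
      exact hwa ⟨σ, c, g j, hσ, hsp, hrt⟩
    · have hlt : (j : ℕ) < (i : ℕ) := by
        rcases Nat.eq_or_lt_of_le hge with he | hl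
        · exact absurd (Fin.ext he.symm) hne
        · exact hl
      obtain ⟨c, hrt, hse⟩ := hchain j i hlt
      obtain ⟨σ, hσ, hsp⟩ := hse
      rw [← hij] at hrt
      exact hwa ⟨σ, c, g i, hσ, hsp, hrt⟩
  calc n = Nat.card (Fin n) := by simp
  _ ≤ Nat.card (STargets D) := Nat.card_le_card_of_injective _ hginj

/-- The rank of a position. -/
noncomputable def rnk (p : Pos S) : ℕ := sSup {n | CountPath D n p}

section RankProps
variable {D} {N : ℕ} (hbd : ∀ (p : Pos S) (n : ℕ), CountPath D n p → n ≤ N)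
include hbd

lemma rnk_bddAbove (p : Pos S) : BddAbove {n | CountPath D n p} :=
  ⟨N, fun n hn => hbd p n hn⟩

lemma countPath_rnk (p : Pos S) : CountPath D (rnk D p) p :=
  Nat.sSup_mem ⟨0, (by trivial : CountPath D 0 p)⟩ (rnk_bddAbove hbd p)

lemma rnk_le_N (p : Pos S) : rnk D p ≤ N :=
  csSup_le ⟨0, (by trivial : CountPath D 0 p)⟩ fun n hn => hbd p n hn

lemma rnk_le_of_edge {p q : Pos S} (h : DepEdge D p q) : rnk D p ≤ rnk D q :=
  le_csSup (rnk_bddAbove hbd q) (countPath_step D h (countPath_rnk hbd p))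

lemma rnk_lt_of_sedge {p q : Pos S} (h : SEdge D p q) : rnk D p < rnk D q :=
  Nat.lt_of_lt_of_le (Nat.lt_succ_self _)
    (le_csSup (rnk_bddAbove hbd q) (countPath_sedge D h (countPath_rnk hbd p)))

end RankProps

end VVRank

section VVTerminal

lemma exists_terminal {α : Type*} (R : α → α → Prop) (a : α)
    (hnc : ∀ f : ℕ → α, f 0 = a → (∀ n, R (f n) (f (n+1))) → False) :
    ∃ b, Relation.ReflTransGen R a b ∧ ∀ c, ¬ R b c := by
  classical
  by_contra hcon
  push_neg at hcon
  have hstep : ∀ b, Relation.ReflTransGen R a b → ∃ c, R b c := by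
    intro b hb
    obtain ⟨c, hc⟩ := hcon b hb
    exact ⟨c, hc⟩
  let g : ℕ → {b // Relation.ReflTransGen R a b} := fun n =>
    Nat.rec ⟨a, Relation.ReflTransGen.refl⟩
      (fun _ p => ⟨Classical.choose (hstep p.1 p.2),
        p.2.tail (Classical.choose_spec (hstep p.1 p.2))⟩) n
  exact hnc (fun n => (g n).1) rfl (fun n => Classical.choose_spec (hstep (g n).1 (g n).2))

end VVTerminal

section VVMain
open Classical

variable {S : Schema}

/-- Variables shared between body and head of a tgd. -/
def sharedVars (σ : TGD S) : Set ℕ := BodyVars σ.body ∩ BodyVars σ.head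

/-- Normalized shared-variable tuple of a trigger. -/
noncomputable def nrmT (σ : TGD S) (h : ℕ → Val) : ℕ → Val :=
  fun x => if x ∈ sharedVars σ then h x else Val.const 0

variable {M : MVSetting} {I : Inst M.S}

lemma mv_adom_const {a : Val} (ha : a ∈ M.mv.adom) : a.IsConst := by
  obtain ⟨p, hp, i, hi⟩ := ha
  exact hi ▸ M.mvGround p.1 p.2 hp i

/-- The state carried along the chase construction. -/
structure St (M : MVSetting) (I : Inst M.S) : Type where
  J : Inst M.S
  hom : Val → Val
  U : ℕ
  Dead : Set Val
  rkv : Val → ℕ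
  Fired : Set ((_ : TGD M.S) × (ℕ → Val))
  hfin : J.facts.Finite
  homc : ∀ c, hom (Val.const c) = Val.const c
  homf : ∀ p ∈ J.facts,
    (⟨p.1, fun i => hom (p.2 i)⟩ : (r : M.S.rel) × (Fin (M.S.arity r) → Val)) ∈ I.facts
  hU : ∀ n, U ≤ n → Val.null n ∉ J.adom ∧ Val.null n ∉ Dead ∧
    ∀ pr ∈ Fired, ∀ x ∈ sharedVars pr.1, pr.2 x ≠ Val.null n
  hDead : ∀ d ∈ Dead, d ∉ J.adom
  hDeadNull : ∀ d ∈ Dead, ∃ n, d = Val.null n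
  hrkv0 : ∀ c, rkv (Val.const c) = 0
  hI1 : ∀ p ∈ J.facts, ∀ j, rkv (p.2 j) ≤ rnk M.deps (p.1, (j : ℕ))
  hW : ∀ pr ∈ Fired, (∀ x ∈ sharedVars pr.1, pr.2 x ∉ Dead) →
    ∃ g : ℕ → Val, (∀ x ∈ sharedVars pr.1, g x = pr.2 x) ∧ BodyHolds g pr.1.head J

lemma St.transfer (s : St M I) {h : ℕ → Val} {B : List (Atom M.S)}
    (hb : BodyHolds h B s.J) : BodyHolds (fun x => s.hom (h x)) B I :=
  bodyHolds_transfer s.homc s.homf hb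

lemma St.rk_le {N : ℕ} (hbd : ∀ (p : Pos M.S) (n : ℕ), CountPath M.deps n p → n ≤ N)
    (s : St M I) {v : Val} (hv : v ∈ s.J.adom) : s.rkv v ≤ N := by
  obtain ⟨p, hp, j, hj⟩ := hv
  exact hj ▸ Nat.le_trans (s.hI1 p hp j) (rnk_le_N hbd _)

/-- Shape of a tgd chase step on states. -/
def TShape (s s' : St M I) : Prop :=
  ∃ (σ : TGD M.S) (h : ℕ → Val) (FR : Set Val),
    Dep.tgd σ ∈ M.deps ∧
    (⟨σ, nrmT σ h⟩ : (_ : TGD M.S) × (ℕ → Val)) ∉ s.Fired ∧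
    (⟨σ, nrmT σ h⟩ : (_ : TGD M.S) × (ℕ → Val)) ∈ s'.Fired ∧
    s.Fired ⊆ s'.Fired ∧ s.U ≤ s'.U ∧ s'.Dead = s.Dead ∧
    FR.Finite ∧ (∀ v ∈ FR, ∃ n, s.U ≤ n ∧ v = Val.null n) ∧
    s'.J.adom ⊆ s.J.adom ∪ FR ∧
    (∀ x ∈ sharedVars σ, h x ∈ s.J.adom) ∧
    (∀ v, v ∉ FR → s'.rkv v = s.rkv v) ∧
    (∀ v ∈ FR, (sharedVars σ = ∅ ∧ s'.rkv v = 0) ∨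
      (∀ x ∈ sharedVars σ, s.rkv (h x) < s'.rkv v))

/-- Shape of an egd-like (merging) chase step on states. -/
def MShape (s s' : St M I) : Prop :=
  ∃ a : Val, a ∈ s.J.adom ∧ a ∈ s'.Dead ∧ s.Dead ⊆ s'.Dead ∧
    s'.Fired = s.Fired ∧ s.U ≤ s'.U ∧ s'.rkv = s.rkv ∧
    s'.J.adom ⊆ s.J.adom ∪ M.mv.adom

def CoreStep (s s' : St M I) : Prop := TShape s s' ∨ MShape s s'

lemma dep_mvStep {J J' : Inst M.S} (hdep : depStepTo M.deps J J') :
    M.mvStep (some J) (some J') := by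
  rcases hdep with ⟨σ, hσ, hst⟩ | ⟨σ, hσ, hst⟩
  · exact ⟨{some J'}, Or.inl ⟨σ, hσ, J', hst, rfl⟩, rfl⟩
  · exact ⟨{some J'}, Or.inr (Or.inl ⟨σ, hσ, J', hst, rfl⟩), rfl⟩

/-- Generic merging step: applying a value substitution to the instance. -/
lemma buildMap (s : St M I) (ρs : Val → Val) (V : Set Val)
    (hV : ∀ v ∈ V, (∃ n, v = Val.null n) ∧ v ∈ s.J.adom)
    (hVne : V.Nonempty)
    (hid : ∀ v, v ∉ V → ρs v = v)
    (hconst : ∀ c, ρs (Val.const c) = Val.const c)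
    (hnd : ∀ v ∈ V, ρs v ∉ s.Dead ∧ ρs v ∉ V)
    (hhom : ∀ v, s.hom (ρs v) = s.hom v)
    (hrk : ∀ v ∈ V, s.rkv (ρs v) ≤ s.rkv v)
    (hadm : ∀ v ∈ V, ρs v ∈ s.J.adom ∨ ρs v ∈ M.mv.adom) :
    ∃ s' : St M I, s'.J = s.J.map ρs ∧ s'.Dead = s.Dead ∪ V ∧ s'.Fired = s.Fired ∧
      s'.U = s.U ∧ s'.rkv = s.rkv ∧ s'.hom = s.hom ∧ MShape s s' := by
  have hadom' : (s.J.map ρs).adom ⊆ s.J.adom ∪ M.mv.adom := by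
    intro a ha
    obtain ⟨w, hw, rfl⟩ := adom_map_subset ha
    by_cases hwV : w ∈ V
    · rcases hadm w hwV with h | h
      exacts [Or.inl h, Or.inr h]
    · rw [hid w hwV]; exact Or.inl hw
  have heval : ∀ (g : ℕ → Val) (A : Atom M.S),
      (fun i => (A.args i).eval (fun y => ρs (g y))) = fun i => ρs ((A.args i).eval g) := by
    intro g A; funext i; exact term_eval_comp hconst g _
  refine ⟨⟨s.J.map ρs, s.hom, s.U, s.Dead ∪ V, s.rkv, s.Fired, ?_, s.homc, ?_, ?_, ?_, ?_,
    s.hrkv0, ?_, ?_⟩, rfl, rfl, rfl, rfl, rfl, rfl, ?_⟩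
  · rw [facts_map]; exact s.hfin.image _
  · -- homf
    intro p hp
    rw [facts_map] at hp
    obtain ⟨q, hq, rfl⟩ := hp
    have : (fun i => s.hom (ρs (q.2 i))) = fun i => s.hom (q.2 i) := by
      funext i; exact hhom _
    simpa [this] using s.homf q hq
  · -- hU
    intro n hn
    refine ⟨?_, ?_, ?_⟩
    · intro hmem
      obtain ⟨w, hw, hwe⟩ := adom_map_subset hmem
      by_cases hwV : w ∈ V
      · rcases hadm w hwV with h | h
        · rw [hwe] at h; exact (s.hU n hn).1 h
        · rw [hwe] at h
          obtain ⟨c, hc⟩ := mv_adom_const h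
          exact Val.noConfusion hc
      · rw [hid w hwV] at hwe; rw [hwe] at hw; exact (s.hU n hn).1 hw
    · rintro (hd | hd)
      · exact (s.hU n hn).2.1 hd
      · exact (s.hU n hn).1 (hV _ hd).2
    · exact (s.hU n hn).2.2
  · -- hDead
    rintro d (hd | hd) hmem
    · obtain ⟨w, hw, hwe⟩ := adom_map_subset hmem
      by_cases hwV : w ∈ V
      · rw [← hwe] at hd
        exact (hnd w hwV).1 hd
      · rw [hid w hwV] at hwe; rw [hwe] at hw; exact s.hDead d hd hw
    · obtain ⟨w, hw, hwe⟩ := adom_map_subset hmem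
      by_cases hwV : w ∈ V
      · rw [← hwe] at hd; exact (hnd w hwV).2 hd
      · rw [hid w hwV] at hwe; rw [hwe] at hwV; exact hwV hd
  · -- hDeadNull
    rintro d (hd | hd)
    exacts [s.hDeadNull d hd, (hV d hd).1]
  · -- hI1
    intro p hp j
    rw [facts_map] at hp
    obtain ⟨q, hq, rfl⟩ := hp
    show s.rkv (ρs (q.2 j)) ≤ rnk M.deps (q.1, (j : ℕ))
    by_cases hwV : q.2 j ∈ V
    · exact Nat.le_trans (hrk _ hwV) (s.hI1 q hq j)
    · rw [hid _ hwV]; exact s.hI1 q hq j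
  · -- hW
    intro pr hpr hnotdead
    have hnd' : ∀ x ∈ sharedVars pr.1, pr.2 x ∉ s.Dead := by
      intro x hx
      exact fun hc => hnotdead x hx (Or.inl hc)
    obtain ⟨g, hg1, hg2⟩ := s.hW pr hpr hnd'
    refine ⟨fun y => ρs (g y), ?_, ?_⟩
    · intro x hx
      show ρs (g x) = pr.2 x
      rw [hg1 x hx]
      exact hid _ (fun hc => hnotdead x hx (Or.inr hc))
    · intro A hA
      rw [heval]
      exact mem_facts_map (show (⟨A.rel, fun i => (A.args i).eval g⟩ :
        (r : M.S.rel) × (Fin (M.S.arity r) → Val)) ∈ s.J.facts from hg2 A hA)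
  · -- MShape
    obtain ⟨a, ha⟩ := hVne
    exact ⟨a, (hV a ha).2, Or.inr ha, fun d hd => Or.inl hd, rfl, le_refl _, rfl, hadom'⟩

end VVMain

section VVBuild
open Classical
variable {M : MVSetting} {I : Inst M.S}

lemma buildT {N : ℕ} (hbd : ∀ (p : Pos M.S) (n : ℕ), CountPath M.deps n p → n ≤ N)
    (hVB : M.ValidBase I)
    (s : St M I) {σ : TGD M.S} {h : ℕ → Val} (hσ : Dep.tgd σ ∈ M.deps)
    (hb : BodyHolds h σ.body s.J)
    (hviol : ¬ ∃ g : ℕ → Val, (∀ x ∈ BodyVars σ.body, g x = h x) ∧ BodyHolds g σ.head s.J) :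
    ∃ s' : St M I, TShape s s' ∧ tgdStep σ s.J s'.J := by
  classical
  have hcf : (∀ A ∈ σ.body, A.ConstantFree) ∧ ∀ A ∈ σ.head, A.ConstantFree :=
    M.depsConstantFree (Dep.tgd σ) hσ
  set EV : Set ℕ := {x | x ∈ BodyVars σ.head ∧ x ∉ BodyVars σ.body} with hEVdef
  obtain ⟨B, hB⟩ : ∃ B, ∀ x ∈ BodyVars σ.head, x < B := by
    obtain ⟨b, hb'⟩ := (bodyVars_finite σ.head).bddAbove
    exact ⟨b + 1, fun x hx => Nat.lt_succ_of_le (hb' hx)⟩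
  have hEVfin : EV.Finite := (bodyVars_finite σ.head).subset fun x hx => hx.1
  set h' : ℕ → Val := fun x => if x ∈ EV then Val.null (s.U + x) else h x with hh'
  set FR : Set Val := (fun x => Val.null (s.U + x)) '' EV with hFRdef
  set J' : Inst M.S := Inst.ofFacts (s.J.facts ∪ factSet σ.head h') with hJ'def
  have hFRmem : ∀ v ∈ FR, ∃ n, s.U ≤ n ∧ v = Val.null n := by
    rintro v ⟨x, hx, rfl⟩; exact ⟨s.U + x, Nat.le_add_right _ _, rfl⟩
  have hFRnotadom : ∀ v ∈ s.J.adom, v ∉ FR := by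
    rintro v hv ⟨x, hx, rfl⟩
    exact (s.hU (s.U + x) (Nat.le_add_right _ _)).1 hv
  have hnotFRconst : ∀ c, Val.const c ∉ FR := by
    intro c hc; obtain ⟨n, _, he⟩ := hFRmem _ hc; exact Val.noConfusion he
  have hsharedadom : ∀ x ∈ sharedVars σ, h x ∈ s.J.adom := fun x hx => val_mem_adom hb hx.1
  have hnewval : ∀ A ∈ σ.head, ∀ i : Fin (M.S.arity A.rel),
      (∃ x ∈ EV, (A.args i).eval h' = Val.null (s.U + x) ∧
        OccursAt σ.head x (A.rel, (i : ℕ))) ∨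
      (∃ x ∈ sharedVars σ, (A.args i).eval h' = h x ∧
        OccursAt σ.head x (A.rel, (i : ℕ))) := by
    intro A hA i
    obtain ⟨x, hx⟩ := hcf.2 A hA i
    have hocc : OccursAt σ.head x (A.rel, (i : ℕ)) := ⟨A, hA, rfl, i, rfl, hx⟩
    have hxhead : x ∈ BodyVars σ.head := ⟨A, hA, i, hx⟩
    by_cases hxe : x ∈ EV
    · exact Or.inl ⟨x, hxe, by rw [hx]; show h' x = _; rw [hh']; simp [if_pos hxe], hocc⟩
    · have hxb : x ∈ BodyVars σ.body := by
        by_contra hc; exact hxe ⟨hxhead, hc⟩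
      exact Or.inr ⟨x, ⟨hxb, hxhead⟩, by rw [hx]; show h' x = _; rw [hh']; simp [if_neg hxe],
        hocc⟩
  have hadom' : J'.adom ⊆ s.J.adom ∪ FR := by
    intro a ha
    rcases adom_ofFacts_union ha with h1 | h1
    · exact Or.inl h1
    · obtain ⟨p, hp, i, hi⟩ := h1
      obtain ⟨A, hA, rfl⟩ := hp
      have hpi : (A.args i).eval h' = a := hi
      rcases hnewval A hA i with ⟨x, hx, he, _⟩ | ⟨x, hx, he, _⟩
      · exact Or.inr ⟨x, hx, by rw [← hpi, he]⟩
      · refine Or.inl ?_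
        rw [← hpi, he]
        exact hsharedadom x hx
  have hstep : tgdStep σ s.J J' := by
    refine ⟨h, hb, hviol, h', ?_, ?_, ?_, hJ'def⟩
    · intro x hx
      have hne : x ∉ EV := fun hc => hc.2 hx
      rw [hh']; simp [if_neg hne]
    · intro x hx hnb
      have hxe : x ∈ EV := ⟨hx, hnb⟩
      constructor
      · exact ⟨s.U + x, by rw [hh']; simp [if_pos hxe]⟩
      · rw [hh']; simp only [if_pos hxe]
        exact (s.hU (s.U + x) (Nat.le_add_right _ _)).1
    · intro x hx y hy hxy
      rw [hh'] at hxy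
      simp only [if_pos (show x ∈ EV from hx), if_pos (show y ∈ EV from hy)] at hxy
      have : s.U + x = s.U + y := by injection hxy
      omega
  have hRex : ∃ R : ℕ, ((sharedVars σ = ∅ ∧ R = 0) ∨
      (∀ x ∈ sharedVars σ, s.rkv (h x) < R)) ∧
      (∀ z ∈ EV, ∀ q : Pos M.S, OccursAt σ.head z q → R ≤ rnk M.deps q) := by
    rcases Set.eq_empty_or_nonempty (sharedVars σ) with hsh | hsh
    · exact ⟨0, Or.inl ⟨hsh, rfl⟩, fun z _ q _ => Nat.zero_le _⟩
    · have hRSne : ((fun x => s.rkv (h x)) '' sharedVars σ).Nonempty := hsh.image _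
      have hRSbdd : BddAbove ((fun x => s.rkv (h x)) '' sharedVars σ) := by
        refine ⟨N, ?_⟩
        rintro r ⟨x, hx, rfl⟩
        exact s.rk_le hbd (hsharedadom x hx)
      obtain ⟨x₀, hx₀, hx₀e⟩ := Nat.sSup_mem hRSne hRSbdd
      refine ⟨sSup ((fun x => s.rkv (h x)) '' sharedVars σ) + 1, Or.inr ?_, ?_⟩
      · intro x hx
        exact Nat.lt_succ_of_le (le_csSup hRSbdd ⟨x, hx, rfl⟩)
      · intro z hz q hq
        obtain ⟨A₀, hA₀, j₀, hj₀⟩ := hx₀.1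
        have hrk0 : s.rkv (h x₀) ≤ rnk M.deps (A₀.rel, (j₀ : ℕ)) := by
          have hf := hb A₀ hA₀
          have h2 := s.hI1 ⟨A₀.rel, fun i => (A₀.args i).eval h⟩ hf j₀
          simpa [hj₀, Term.eval] using h2
        have hsp : SEdge M.deps (A₀.rel, (j₀ : ℕ)) q :=
          ⟨σ, hσ, x₀, z, ⟨A₀, hA₀, rfl, j₀, rfl, hj₀⟩, hx₀.2, hz.1, hz.2, hq⟩
        have hlt := rnk_lt_of_sedge hbd hsp
        have : s.rkv (h x₀) = sSup ((fun x => s.rkv (h x)) '' sharedVars σ) := hx₀e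
        omega
  obtain ⟨R, hR1, hR2⟩ := hRex
  have hpair : (⟨σ, nrmT σ h⟩ : (_ : TGD M.S) × (ℕ → Val)) ∉ s.Fired := by
    intro hc
    have hnds : ∀ x ∈ sharedVars σ, nrmT σ h x ∉ s.Dead := by
      intro x hx hd
      have : nrmT σ h x = h x := if_pos hx
      rw [this] at hd
      exact s.hDead _ hd (hsharedadom x hx)
    obtain ⟨g, hg1, hg2⟩ := s.hW _ hc hnds
    apply hviol
    refine ⟨fun y => if y ∈ BodyVars σ.body then h y else g y, fun x hx => if_pos hx, ?_⟩
    intro A hA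
    have heq : (fun i => (A.args i).eval (fun y => if y ∈ BodyVars σ.body then h y else g y)) =
        fun i => (A.args i).eval g := by
      funext i
      cases hu : A.args i with
      | const c => simp [Term.eval]
      | var z =>
        simp only [Term.eval]
        by_cases hzb : z ∈ BodyVars σ.body
        · rw [if_pos hzb]
          have hzsh : z ∈ sharedVars σ := ⟨hzb, A, hA, i, hu⟩
          rw [hg1 z hzsh]
          exact (if_pos hzsh).symm
        · rw [if_neg hzb]
    rw [heq]
    exact hg2 A hA
  have hIσ : σ.holds I := hVB.2.1 (Dep.tgd σ) hσ
  obtain ⟨ν', hν'a, hν'b⟩ := hIσ _ (s.transfer hb)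
  set ρ' : Val → Val := fun v => match v with
    | Val.const c => s.hom (Val.const c)
    | Val.null n => if s.U ≤ n ∧ (n - s.U) ∈ EV then ν' (n - s.U) else s.hom (Val.null n)
    with hρ'def
  have hρ'old : ∀ v ∈ s.J.adom, ρ' v = s.hom v := by
    intro v hv
    match v with
    | Val.const c => rfl
    | Val.null n =>
      have hcond : ¬ (s.U ≤ n ∧ (n - s.U) ∈ EV) := by
        rintro ⟨h1, _⟩; exact (s.hU n h1).1 hv
      show (if s.U ≤ n ∧ (n - s.U) ∈ EV then ν' (n - s.U) else s.hom (Val.null n)) = _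
      rw [if_neg hcond]
  have hρ'fresh : ∀ x ∈ EV, ρ' (Val.null (s.U + x)) = ν' x := by
    intro x hx
    have hcond : s.U ≤ s.U + x ∧ (s.U + x - s.U) ∈ EV :=
      ⟨Nat.le_add_right _ _, by simpa using hx⟩
    show (if s.U ≤ s.U + x ∧ (s.U + x - s.U) ∈ EV then ν' (s.U + x - s.U)
      else s.hom (Val.null (s.U + x))) = _
    rw [if_pos hcond]
    congr 1
    omega
  refine ⟨⟨J', ρ', s.U + B, s.Dead, fun v => if v ∈ FR then R else s.rkv v,
    insert (⟨σ, nrmT σ h⟩ : (_ : TGD M.S) × (ℕ → Val)) s.Fired,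
    ?_, fun c => s.homc c, ?_, ?_, ?_, s.hDeadNull, ?_, ?_, ?_⟩, ?_, hstep⟩
  · -- hfin
    exact s.hfin.union (factSet_finite _ _)
  · -- homf
    intro p hp
    rcases hp with hp | hp
    · have heq : (fun i => ρ' (p.2 i)) = fun i => s.hom (p.2 i) := by
        funext i; exact hρ'old _ ⟨p, hp, i, rfl⟩
      rw [heq]; exact s.homf p hp
    · obtain ⟨A, hA, hpe⟩ := hp
      have hpe' : p = (⟨A.rel, fun i => (A.args i).eval h'⟩ :
        (r : M.S.rel) × (Fin (M.S.arity r) → Val)) := hpe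
      subst hpe'
      have heq : (fun i => ρ' ((A.args i).eval h')) = fun i => (A.args i).eval ν' := by
        funext i
        obtain ⟨x, hx⟩ := hcf.2 A hA i
        rw [hx]
        show ρ' (h' x) = ν' x
        by_cases hxe : x ∈ EV
        · rw [show h' x = Val.null (s.U + x) by rw [hh']; simp [if_pos hxe]]
          exact hρ'fresh x hxe
        · have hxb : x ∈ BodyVars σ.body := by
            by_contra hc
            exact hxe ⟨⟨A, hA, i, hx⟩, hc⟩
          rw [show h' x = h x by rw [hh']; simp [if_neg hxe],
            hρ'old _ (val_mem_adom hb hxb)]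
          exact (hν'a x hxb).symm
      show (⟨A.rel, fun i => ρ' ((A.args i).eval h')⟩ :
        (r : M.S.rel) × (Fin (M.S.arity r) → Val)) ∈ I.facts
      rw [heq]
      exact hν'b A hA
  · -- hU
    intro n hn
    have hnU : s.U ≤ n := le_trans (Nat.le_add_right _ _) hn
    refine ⟨?_, (s.hU n hnU).2.1, ?_⟩
    · intro hmem
      rcases hadom' hmem with h1 | h1
      · exact (s.hU n hnU).1 h1
      · obtain ⟨x, hx, hxe⟩ := h1
        have hxB : x < B := hB x hx.1
        have : s.U + x = n := by injection hxe
        omega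
    · intro pr hpr x hx
      rcases Set.mem_insert_iff.mp hpr with rfl | hpr
      · intro hcon
        have hcon' : nrmT σ h x = Val.null n := hcon
        have h1 : nrmT σ h x = h x := if_pos hx
        rw [h1] at hcon'
        exact (s.hU n hnU).1 (hcon' ▸ hsharedadom x hx)
      · exact (s.hU n hnU).2.2 pr hpr x hx
  · -- hDead
    intro d hd hmem
    rcases hadom' hmem with h1 | h1
    · exact s.hDead d hd h1
    · obtain ⟨n, hn, rfl⟩ := hFRmem _ h1
      exact (s.hU n hn).2.1 hd
  · -- hrkv0
    intro c
    show (if Val.const c ∈ FR then R else s.rkv (Val.const c)) = 0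
    rw [if_neg (hnotFRconst c)]
    exact s.hrkv0 c
  · -- hI1
    intro p hp j
    rcases hp with hp | hp
    · have : p.2 j ∉ FR := hFRnotadom _ ⟨p, hp, j, rfl⟩
      show (if p.2 j ∈ FR then R else s.rkv (p.2 j)) ≤ _
      rw [if_neg this]
      exact s.hI1 p hp j
    · obtain ⟨A, hA, hpe⟩ := hp
      have hpe' : p = (⟨A.rel, fun i => (A.args i).eval h'⟩ :
        (r : M.S.rel) × (Fin (M.S.arity r) → Val)) := hpe
      subst hpe'
      show (if (A.args j).eval h' ∈ FR then R else s.rkv ((A.args j).eval h')) ≤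
        rnk M.deps (A.rel, (j : ℕ))
      rcases hnewval A hA j with ⟨x, hx, he, hocc⟩ | ⟨x, hx, he, hocc⟩
      · rw [he, if_pos ⟨x, hx, rfl⟩]
        exact hR2 x hx _ hocc
      · rw [he, if_neg (hFRnotadom _ (hsharedadom x hx))]
        obtain ⟨A₁, hA₁, j₁, hj₁⟩ := hx.1
        have hrk1 : s.rkv (h x) ≤ rnk M.deps (A₁.rel, (j₁ : ℕ)) := by
          have hf := hb A₁ hA₁
          have h2 := s.hI1 ⟨A₁.rel, fun i => (A₁.args i).eval h⟩ hf j₁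
          simpa [hj₁, Term.eval] using h2
        have hedge : DepEdge M.deps (A₁.rel, (j₁ : ℕ)) (A.rel, (j : ℕ)) :=
          ⟨σ, hσ, Or.inl ⟨x, ⟨A₁, hA₁, rfl, j₁, rfl, hj₁⟩, hx.2, hocc⟩⟩
        exact le_trans hrk1 (rnk_le_of_edge hbd hedge)
  · -- hW
    intro pr hpr hnd
    rcases Set.mem_insert_iff.mp hpr with heq | hpr
    · subst heq
      refine ⟨h', ?_, ?_⟩
      · intro x hx
        have h1 : h' x = h x := by
          rw [hh']; simp [if_neg (show x ∉ EV from fun hc => hc.2 hx.1)]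
        have h2 : nrmT σ h x = h x := if_pos hx
        rw [h1]; exact h2.symm
      · intro A hA
        exact Or.inr ⟨A, hA, rfl⟩
    · obtain ⟨g, hg1, hg2⟩ := s.hW pr hpr hnd
      exact ⟨g, hg1, bodyHolds_mono (Set.subset_union_left) hg2⟩
  · -- TShape
    refine ⟨σ, h, FR, hσ, hpair, Set.mem_insert _ _, Set.subset_insert _ _,
      Nat.le_add_right _ _, rfl, hEVfin.image _, hFRmem, hadom', hsharedadom, ?_, ?_⟩
    · intro v hv
      show (if v ∈ FR then R else s.rkv v) = s.rkv v
      rw [if_neg hv]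
    · intro v hv
      show (sharedVars σ = ∅ ∧ (if v ∈ FR then R else s.rkv v) = 0) ∨
        (∀ x ∈ sharedVars σ, s.rkv (h x) < (if v ∈ FR then R else s.rkv v))
      rcases hR1 with ⟨hsh, hR0⟩ | hlt
      · refine Or.inl ⟨hsh, ?_⟩
        rw [if_pos hv, hR0]
      · refine Or.inr fun x hx => ?_
        rw [if_pos hv]
        exact hlt x hx

lemma buildE (hVB : M.ValidBase I) (s : St M I) {σ : EGD M.S} {h : ℕ → Val}
    (hσ : Dep.egd σ ∈ M.deps) (hb : BodyHolds h σ.body s.J) (hne : h σ.lhs ≠ h σ.rhs) :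
    ∃ s' : St M I, MShape s s' ∧ egdStepOk σ s.J s'.J := by
  classical
  have hIσ : σ.holds I := hVB.2.1 (Dep.egd σ) hσ
  have hhomeq : s.hom (h σ.lhs) = s.hom (h σ.rhs) := hIσ _ (s.transfer hb)
  have hlr : σ.lhs ≠ σ.rhs := fun hc => hne (by rw [hc])
  have hmemvar : ∀ y z : ℕ, (y = σ.lhs ∧ z = σ.rhs ∨ y = σ.rhs ∧ z = σ.lhs) →
      y ∉ BodyVars σ.body → False := by
    intro y z hyz hy
    have hyzne : y ≠ z := by
      rcases hyz with ⟨rfl, rfl⟩ | ⟨rfl, rfl⟩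
      exacts [hlr, hlr.symm]
    have hval : ∀ c : ℕ,
        Function.update (fun x => s.hom (h x)) y (Val.const c) σ.lhs =
        Function.update (fun x => s.hom (h x)) y (Val.const c) σ.rhs := by
      intro c
      apply hIσ
      refine bodyHolds_congr (ν₁ := fun x => s.hom (h x)) ?_ (s.transfer hb)
      intro x hx
      have hxy : x ≠ y := fun he => hy (he ▸ hx)
      exact (Function.update_of_ne hxy (Val.const c) (fun x => s.hom (h x))).symm
    have hkey : ∀ c : ℕ, Val.const c = s.hom (h z) := by
      intro c
      have hvc := hval c
      rcases hyz with ⟨rfl, rfl⟩ | ⟨rfl, rfl⟩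
      · rw [Function.update_self, Function.update_of_ne hyzne.symm] at hvc
        exact hvc
      · rw [Function.update_self, Function.update_of_ne hyzne.symm] at hvc
        exact hvc.symm
    have h0 := hkey 0
    have h1 := hkey 1
    rw [← h0] at h1
    simp at h1
  have hlv : σ.lhs ∈ BodyVars σ.body := by
    by_contra hc; exact hmemvar σ.lhs σ.rhs (Or.inl ⟨rfl, rfl⟩) hc
  have hrv : σ.rhs ∈ BodyVars σ.body := by
    by_contra hc; exact hmemvar σ.rhs σ.lhs (Or.inr ⟨rfl, rfl⟩) hc
  have hla : h σ.lhs ∈ s.J.adom := val_mem_adom hb hlv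
  have hra : h σ.rhs ∈ s.J.adom := val_mem_adom hb hrv
  have main : ∀ a b : Val, (∃ n, a = Val.null n) → s.rkv b ≤ s.rkv a →
      a ∈ s.J.adom → b ∈ s.J.adom → s.hom a = s.hom b → a ≠ b →
      ∃ s' : St M I, MShape s s' ∧ s'.J = s.J.map (fun v => if v = a then b else v) := by
    intro a b hanull hrk ha hb' hhom hab
    have hfpos : (fun v => if v = a then b else v) a = b := if_pos rfl
    have hfneg : ∀ v, v ≠ a → (fun v => if v = a then b else v) v = v := fun v hv => if_neg hv
    have hfc : ∀ c : ℕ, (fun v => if v = a then b else v) (Val.const c) = Val.const c := by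
      intro c
      refine hfneg _ ?_
      intro hcon
      obtain ⟨n, hn⟩ := hanull
      rw [hn] at hcon
      exact Val.noConfusion hcon
    obtain ⟨s', hJ, _, _, _, _, _, hM⟩ := buildMap s (fun v => if v = a then b else v) {a}
      (fun v hv => by rw [Set.mem_singleton_iff] at hv; subst hv; exact ⟨hanull, ha⟩)
      ⟨a, rfl⟩
      (fun v hv => hfneg v (by simpa using hv))
      hfc
      (fun v hv => by
        rw [Set.mem_singleton_iff] at hv; subst hv
        rw [if_pos rfl]
        exact ⟨fun hd => s.hDead b hd hb', by simpa using (Ne.symm hab)⟩)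
      (fun v => by
        by_cases hv : v = a
        · subst hv; rw [if_pos rfl]; exact hhom.symm
        · rw [if_neg hv])
      (fun v hv => by
        rw [Set.mem_singleton_iff] at hv; subst hv
        rw [if_pos rfl]; exact hrk)
      (fun v hv => by
        rw [Set.mem_singleton_iff] at hv; subst hv
        rw [if_pos rfl]; exact Or.inl hb')
    exact ⟨s', hM, hJ⟩
  rcases val_cases (h σ.lhs) with hln | hlc
  · rcases val_cases (h σ.rhs) with hrn | hrc
    · by_cases hrk : s.rkv (h σ.rhs) ≤ s.rkv (h σ.lhs)
      · obtain ⟨s', hM, hJ⟩ := main _ _ hln hrk hla hra hhomeq hne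
        exact ⟨s', hM, h, hb, hne, Or.inl ⟨hln, hJ⟩⟩
      · obtain ⟨s', hM, hJ⟩ := main _ _ hrn (Nat.le_of_lt (Nat.lt_of_not_le hrk)) hra hla
          hhomeq.symm (Ne.symm hne)
        exact ⟨s', hM, h, hb, hne, Or.inr ⟨hrn, hJ⟩⟩
    · obtain ⟨c, hc⟩ := hrc
      have h0 : s.rkv (h σ.rhs) = 0 := by rw [hc]; exact s.hrkv0 c
      obtain ⟨s', hM, hJ⟩ := main _ _ hln (by omega) hla hra hhomeq hne
      exact ⟨s', hM, h, hb, hne, Or.inl ⟨hln, hJ⟩⟩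
  · rcases val_cases (h σ.rhs) with hrn | hrc
    · obtain ⟨c, hc⟩ := hlc
      have h0 : s.rkv (h σ.lhs) = 0 := by rw [hc]; exact s.hrkv0 c
      obtain ⟨s', hM, hJ⟩ := main _ _ hrn (by omega) hra hla hhomeq.symm (Ne.symm hne)
      exact ⟨s', hM, h, hb, hne, Or.inr ⟨hrn, hJ⟩⟩
    · obtain ⟨c, hc⟩ := hlc
      obtain ⟨d, hd⟩ := hrc
      exfalso
      apply hne
      have h1 := hhomeq
      rw [hc, hd, s.homc, s.homc] at h1
      rw [hc, hd]
      exact h1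

lemma buildG (hVB : M.ValidBase I) (s : St M I) {vi : M.views.idx} {h : ℕ → Val}
    (hmvne : (M.mv.rels vi).Nonempty) (harity : 1 ≤ M.views.arity vi)
    (hb : BodyHolds h (M.views.defn vi).body s.J)
    (hdiff : ∀ t ∈ M.mv.rels vi, ∃ i, headVals (M.views.defn vi) h i ≠ t i) :
    ∃ s' : St M I, MShape s s' ∧ M.mvStep (some s.J) (some s'.J) := by
  classical
  set vals : Fin (M.views.arity vi) → Val := headVals (M.views.defn vi) h with hvals
  set tstar : Fin (M.views.arity vi) → Val := fun i => s.hom (vals i) with htstar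
  have htans : tstar ∈ M.mv.rels vi := by
    rw [← hVB.2.2 vi]
    refine ⟨fun x => s.hom (h x), s.transfer hb, ?_⟩
    funext i
    show s.hom (((M.views.defn vi).head i).eval h) =
      ((M.views.defn vi).head i).eval fun x => s.hom (h x)
    rw [term_eval_comp s.homc]
  have hmvfact : (⟨vi, tstar⟩ : (v : M.views.idx) × (Fin (M.views.arity v) → Val)) ∈
      M.mv.facts := htans
  have htconst : ∀ i, ∃ c, tstar i = Val.const c := by
    intro i
    exact mv_adom_const ⟨⟨vi, tstar⟩, hmvfact, i, rfl⟩
  set ρs : Val → Val := fun w => if ∃ j, vals j = w then s.hom w else w with hρs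
  have hρpos : ∀ v, (∃ j, vals j = v) → ρs v = s.hom v := fun v hv => if_pos hv
  have hρneg : ∀ v, ¬ (∃ j, vals j = v) → ρs v = v := fun v hv => if_neg hv
  set V : Set Val := {w | (∃ j, vals j = w) ∧ ∃ n, w = Val.null n} with hVdef
  have hVne : V.Nonempty := by
    by_contra hemp
    rw [Set.not_nonempty_iff_eq_empty] at hemp
    have hallc : ∀ i, vals i = tstar i := by
      intro i
      rcases val_cases (vals i) with ⟨n, hn⟩ | ⟨c, hc⟩
      · exfalso
        have hmem : vals i ∈ V := ⟨⟨i, rfl⟩, n, hn⟩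
        rw [hemp] at hmem
        exact hmem
      · show vals i = s.hom (vals i)
        rw [hc, s.homc]
    obtain ⟨i, hnei⟩ := hdiff tstar htans
    exact hnei (hallc i)
  have hVadom : ∀ w ∈ V, w ∈ s.J.adom := by
    rintro w ⟨⟨j, hj⟩, n, hn⟩
    cases hterm : (M.views.defn vi).head j with
    | var x =>
      have hvx : vals j = h x := by
        show ((M.views.defn vi).head j).eval h = h x
        rw [hterm]
        rfl
      have hxv : x ∈ BodyVars (M.views.defn vi).body := by
        obtain ⟨A, hA, jj, hjj⟩ := (M.views.safe vi).2 x ⟨j, hterm⟩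
        exact ⟨A, hA, jj, hjj⟩
      rw [← hj, hvx]
      exact val_mem_adom hb hxv
    | const c =>
      exfalso
      have hvc : vals j = Val.const c := by
        show ((M.views.defn vi).head j).eval h = Val.const c
        rw [hterm]
        rfl
      rw [hj, hn] at hvc
      exact Val.noConfusion hvc
  have hhomV : ∀ w, (∃ j, vals j = w) → ∃ c, s.hom w = Val.const c := by
    rintro w ⟨j, rfl⟩
    exact htconst j
  obtain ⟨s', hJ, _, _, _, _, _, hM⟩ := buildMap s ρs V
    (fun v hv => ⟨hv.2, hVadom v hv⟩)
    hVne
    (fun v hv => by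
      by_cases hr : ∃ j, vals j = v
      · rw [hρpos v hr]
        rcases val_cases v with ⟨n, hn⟩ | ⟨c, hc⟩
        · exact absurd (⟨hr, n, hn⟩ : v ∈ V) hv
        · rw [hc, s.homc]
      · exact hρneg v hr)
    (fun c => by
      by_cases hr : ∃ j, vals j = Val.const c
      · rw [hρpos _ hr, s.homc]
      · exact hρneg _ hr)
    (fun v hv => by
      rw [hρpos v hv.1]
      obtain ⟨c, hc⟩ := hhomV v hv.1
      rw [hc]
      constructor
      · intro hd
        obtain ⟨n, hn⟩ := s.hDeadNull _ hd
        exact Val.noConfusion hn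
      · intro hmem
        obtain ⟨n, hn⟩ := hmem.2
        exact Val.noConfusion hn)
    (fun v => by
      by_cases hr : ∃ j, vals j = v
      · rw [hρpos v hr]
        obtain ⟨c, hc⟩ := hhomV v hr
        rw [hc, s.homc]
      · rw [hρneg v hr])
    (fun v hv => by
      rw [hρpos v hv.1]
      obtain ⟨c, hc⟩ := hhomV v hv.1
      rw [hc, s.hrkv0 c]
      exact Nat.zero_le _)
    (fun v hv => by
      rw [hρpos v hv.1]
      obtain ⟨j, hj⟩ := hv.1
      refine Or.inr ⟨⟨vi, tstar⟩, hmvfact, j, ?_⟩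
      rw [← hj])
  have hsub : substResult s.J s'.J vals tstar := by
    refine ⟨ρs, ?_, ?_, ?_, ?_⟩
    · intro c
      by_cases hr : ∃ j, vals j = Val.const c
      · rw [hρpos _ hr, s.homc]
      · exact hρneg _ hr
    · intro a ha
      refine hρneg _ ?_
      rintro ⟨j, hj⟩
      exact ha j hj.symm
    · intro j
      exact hρpos _ ⟨j, rfl⟩
    · exact hJ
  refine ⟨s', hM, M.gedResults vi s.J h, ?_, ?_⟩
  · exact Or.inr (Or.inr (Or.inr (Or.inr ⟨vi, hmvne, harity, h, hb, hdiff, rfl⟩)))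
  · exact Or.inl ⟨tstar, htans, s'.J, rfl, hsub⟩

end VVBuild

section VVCount
open Classical
variable {M : MVSetting} {I : Inst M.S}

/-- Normalized fired pairs over a value set. -/
def PairSet (M : MVSetting) (W : Set Val) : Set ((_ : TGD M.S) × (ℕ → Val)) :=
  {pr | Dep.tgd pr.1 ∈ M.deps ∧ (∀ x ∈ sharedVars pr.1, pr.2 x ∈ W) ∧
    ∀ x, x ∉ sharedVars pr.1 → pr.2 x = Val.const 0}

lemma pairSet_finite {W : Set Val} (hW : W.Finite) : (PairSet M W).Finite := by
  have hsub : PairSet M W ⊆ ⋃ σ ∈ {σ : TGD M.S | Dep.tgd σ ∈ M.deps},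
      (Sigma.mk σ) '' {g : ℕ → Val | (∀ x ∈ sharedVars σ, g x ∈ W) ∧
        ∀ x, x ∉ sharedVars σ → g x = Val.const 0} := by
    rintro ⟨σ, g⟩ ⟨h1, h2, h3⟩
    exact Set.mem_biUnion h1 ⟨g, ⟨h2, h3⟩, rfl⟩
  refine (Set.Finite.biUnion (tgds_finite _ M.depsFinite) fun σ _ => ?_).subset hsub
  exact (funSpace_finite ((bodyVars_finite σ.body).subset (Set.inter_subset_left)) hW
    (Val.const 0)).image _

lemma no_infinite_core {N : ℕ}
    (hbd : ∀ (p : Pos M.S) (n : ℕ), CountPath M.deps n p → n ≤ N)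
    (f : ℕ → St M I) (hf : ∀ n, CoreStep (f n) (f (n+1))) : False := by
  classical
  -- per-step monotonicity
  have stepU : ∀ n, (f n).U ≤ (f (n+1)).U := by
    intro n
    rcases hf n with ⟨σ, h, FR, _, _, _, _, hU, _⟩ | ⟨a, _, _, _, _, hU, _⟩
    exacts [hU, hU]
  have stepF : ∀ n, (f n).Fired ⊆ (f (n+1)).Fired := by
    intro n
    rcases hf n with ⟨σ, h, FR, _, _, _, hF, _⟩ | ⟨a, _, _, _, hF, _⟩
    exacts [hF, hF ▸ Set.Subset.refl _]
  have stepD : ∀ n, (f n).Dead ⊆ (f (n+1)).Dead := by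
    intro n
    rcases hf n with ⟨σ, h, FR, _, _, _, _, _, hD, _⟩ | ⟨a, _, _, hD, _⟩
    exacts [hD ▸ Set.Subset.refl _, hD]
  have hUm : ∀ k m, k ≤ m → (f k).U ≤ (f m).U := by
    intro k m hkm
    induction m, hkm using Nat.le_induction with
    | base => exact le_refl _
    | succ m hm ih => exact le_trans ih (stepU m)
  have hFm : ∀ k m, k ≤ m → (f k).Fired ⊆ (f m).Fired := by
    intro k m hkm
    induction m, hkm using Nat.le_induction with
    | base => exact Set.Subset.refl _
    | succ m hm ih => exact Set.Subset.trans ih (stepF m)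
  have hDm : ∀ k m, k ≤ m → (f k).Dead ⊆ (f m).Dead := by
    intro k m hkm
    induction m, hkm using Nat.le_induction with
    | base => exact Set.Subset.refl _
    | succ m hm ih => exact Set.Subset.trans ih (stepD m)
  -- rkv stability on values already in the active domain
  have hadomnull : ∀ k v, v ∈ (f k).J.adom → ∀ n, v = Val.null n → n < (f k).U := by
    intro k v hv n he
    by_contra hc
    exact ((f k).hU n (Nat.le_of_not_lt hc)).1 (he ▸ hv)
  have hrkstab : ∀ k, ∀ v ∈ (f k).J.adom, ∀ m, k ≤ m → (f m).rkv v = (f k).rkv v := by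
    intro k v hv m hkm
    induction m, hkm using Nat.le_induction with
    | base => rfl
    | succ m hm ih =>
      rcases hf m with ⟨σ, h, FR, _, _, _, _, _, _, _, hFRmem, _, _, hoff, _⟩ |
        ⟨a, _, _, _, _, _, hrkeq, _⟩
      · rw [← ih]
        apply hoff
        intro hc
        obtain ⟨n, hn, he⟩ := hFRmem v hc
        have := hadomnull k v hv n he
        have := hUm k m hm
        omega
      · rw [← ih]
        exact congrFun hrkeq v
  -- extraction of tgd-step data
  have hTpair : ∀ n, TShape (f n) (f (n+1)) →
      ∃ pr : (_ : TGD M.S) × (ℕ → Val),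
        (Dep.tgd pr.1 ∈ M.deps ∧ pr ∉ (f n).Fired ∧ pr ∈ (f (n+1)).Fired ∧
          (∀ x ∈ sharedVars pr.1, pr.2 x ∈ (f n).J.adom) ∧
          (∀ x, x ∉ sharedVars pr.1 → pr.2 x = Val.const 0)) ∧
        (∀ v, v ∈ (f (n+1)).J.adom → v ∉ (f n).J.adom →
          ∀ x ∈ sharedVars pr.1, (f n).rkv (pr.2 x) + 1 ≤ (f (n+1)).rkv v) := by
    intro n hT
    obtain ⟨σ, h, FR, hσ, hnf, hmf, _, _, _, _, _, hadom, hshared, _, hFRrk⟩ := hT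
    refine ⟨⟨σ, nrmT σ h⟩, ⟨hσ, hnf, hmf, ?_, ?_⟩, ?_⟩
    · intro x hx
      show nrmT σ h x ∈ (f n).J.adom
      have h1 : nrmT σ h x = h x := if_pos hx
      rw [h1]
      exact hshared x hx
    · intro x hx
      exact if_neg hx
    · intro v hv1 hv2 x hx
      have hvFR : v ∈ FR := by
        rcases hadom hv1 with hc | hc
        exacts [absurd hc hv2, hc]
      show (f n).rkv (nrmT σ h x) + 1 ≤ (f (n+1)).rkv v
      have h1 : nrmT σ h x = h x := if_pos hx
      rw [h1]
      rcases hFRrk v hvFR with ⟨hsh, _⟩ | hlt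
      · exact absurd hx (by rw [hsh]; exact Set.notMem_empty x)
      · exact hlt x hx
  -- per-step new active-domain values
  have hmvfin : M.mv.adom.Finite := adom_finite M.mvFinite
  have hnewT : ∀ n, TShape (f n) (f (n+1)) →
      ((f (n+1)).J.adom \ (f n).J.adom).Finite := by
    intro n hT
    obtain ⟨σ, h, FR, _, _, _, _, _, _, hFRfin, _, hadom, _⟩ := hT
    refine hFRfin.subset ?_
    rintro v ⟨hv1, hv2⟩
    rcases hadom hv1 with hc | hc
    exacts [absurd hc hv2, hc]
  -- the stratified value sets
  set Vals : ℕ → Set Val :=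
    fun j => {v | ∃ k, v ∈ (f k).J.adom ∧ (f k).rkv v ≤ j} with hVals
  have hValsfin : ∀ j, (Vals j).Finite := by
    intro j
    induction j using Nat.strong_induction_on with
    | _ j ih =>
      set W : Set Val := {v | ∃ k, v ∈ (f k).J.adom ∧ (f k).rkv v + 1 ≤ j} with hWdef
      have hWfin : W.Finite := by
        cases j with
        | zero =>
          refine Set.finite_empty.subset ?_
          rintro v ⟨k, _, hk⟩
          omega
        | succ j' =>
          refine (ih j' (Nat.lt_succ_self _)).subset ?_
          rintro v ⟨k, hk1, hk2⟩
          exact ⟨k, hk1, by omega⟩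
      set K : Set ℕ := {k | ∃ pr : (_ : TGD M.S) × (ℕ → Val),
        (Dep.tgd pr.1 ∈ M.deps ∧ pr ∉ (f k).Fired ∧ pr ∈ (f (k+1)).Fired ∧
          (∀ x ∈ sharedVars pr.1, pr.2 x ∈ (f k).J.adom) ∧
          (∀ x, x ∉ sharedVars pr.1 → pr.2 x = Val.const 0)) ∧
        (∀ x ∈ sharedVars pr.1, pr.2 x ∈ W)} with hK
      have hKfin : K.Finite := by
        have hchoice : ∀ k ∈ K, ∃ pr : (_ : TGD M.S) × (ℕ → Val),
            pr ∈ PairSet M W ∧ pr ∉ (f k).Fired ∧ pr ∈ (f (k+1)).Fired := by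
          rintro k ⟨pr, ⟨h1, h2, h3, _, h5⟩, h6⟩
          exact ⟨pr, ⟨h1, h6, h5⟩, h2, h3⟩
        set g : ℕ → ((_ : TGD M.S) × (ℕ → Val)) := fun k =>
          if hk : k ∈ K then Classical.choose (hchoice k hk)
          else ⟨⟨[], []⟩, fun _ => Val.const 0⟩ with hg
        have hginj : Set.InjOn g K := by
          intro k hk m hm hge
          by_contra hne
          rcases Nat.lt_or_ge k m with hlt | hge2
          · have hk1 := Classical.choose_spec (hchoice k hk)
            have hm1 := Classical.choose_spec (hchoice m hm)
            have e1 : g k = Classical.choose (hchoice k hk) := dif_pos hk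
            have e2 : g m = Classical.choose (hchoice m hm) := dif_pos hm
            apply hm1.2.1
            rw [← e2, ← hge, e1]
            exact hFm (k+1) m hlt hk1.2.2
          · have hlt : m < k := by omega
            have hk1 := Classical.choose_spec (hchoice k hk)
            have hm1 := Classical.choose_spec (hchoice m hm)
            have e1 : g k = Classical.choose (hchoice k hk) := dif_pos hk
            have e2 : g m = Classical.choose (hchoice m hm) := dif_pos hm
            apply hk1.2.1
            rw [← e1, hge, e2]
            exact hFm (m+1) k hlt hm1.2.2
        have himg : g '' K ⊆ PairSet M W := by
          rintro pr ⟨k, hk, rfl⟩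
          have e1 : g k = Classical.choose (hchoice k hk) := dif_pos hk
          rw [e1]
          exact (Classical.choose_spec (hchoice k hk)).1
        exact Set.Finite.of_finite_image ((pairSet_finite hWfin).subset himg) hginj
      -- main inclusion
      have hsub : Vals j ⊆ (f 0).J.adom ∪ M.mv.adom ∪
          ⋃ k ∈ K, ((f (k+1)).J.adom \ (f k).J.adom) := by
        rintro v ⟨k₀, hk₀, hrk₀⟩
        have hex : ∃ k, v ∈ (f k).J.adom := ⟨k₀, hk₀⟩
        have hfind := Nat.find_spec hex
        have hfindle : Nat.find hex ≤ k₀ := Nat.find_min' hex hk₀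
        cases hfe : Nat.find hex with
        | zero =>
          rw [hfe] at hfind
          exact Or.inl (Or.inl hfind)
        | succ k =>
          rw [hfe] at hfind
          have hnotk : v ∉ (f k).J.adom := by
            intro hc
            have := Nat.find_min hex (m := k) (by omega)
            exact this hc
          have hrk1 : (f (k+1)).rkv v ≤ j := by
            have h1 : (f k₀).rkv v = (f (k+1)).rkv v := by
              have : k + 1 ≤ k₀ := by omega
              exact hrkstab (k+1) v hfind k₀ this
            omega
          rcases hf k with hT | hM
          · obtain ⟨pr, hpr1, hpr2⟩ := hTpair k hT
            have hkK : k ∈ K := by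
              refine ⟨pr, hpr1, ?_⟩
              intro x hx
              have := hpr2 v hfind hnotk x hx
              exact ⟨k, hpr1.2.2.2.1 x hx, by omega⟩
            exact Or.inr (Set.mem_biUnion hkK ⟨hfind, hnotk⟩)
          · obtain ⟨a, _, _, _, _, _, _, hadom⟩ := hM
            rcases hadom hfind with hc | hc
            exacts [absurd hc hnotk, Or.inl (Or.inr hc)]
      refine (((adom_finite (f 0).hfin).union hmvfin).union
        (hKfin.biUnion fun k hk => ?_)).subset hsub
      rcases hf k with hT | hM
      · exact hnewT k hT
      · obtain ⟨a, _, _, _, _, _, _, hadom⟩ := hM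
        refine hmvfin.subset ?_
        rintro v ⟨hv1, hv2⟩
        rcases hadom hv1 with hc | hc
        exacts [absurd hc hv2, hc]
  -- all values ever in the active domain
  set Ever : Set Val := ⋃ k, (f k).J.adom with hEver
  have hEverfin : Ever.Finite := by
    refine (hValsfin N).subset ?_
    rintro v ⟨s, ⟨k, rfl⟩, hv⟩
    exact ⟨k, hv, (f k).rk_le hbd hv⟩
  -- final injection
  have hMvict : ∀ n, ¬ TShape (f n) (f (n+1)) →
      ∃ a, a ∈ (f n).J.adom ∧ a ∈ (f (n+1)).Dead := by
    intro n hnT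
    rcases hf n with hT | ⟨a, h1, h2, _⟩
    exacts [absurd hT hnT, ⟨a, h1, h2⟩]
  set g : ℕ → ((_ : TGD M.S) × (ℕ → Val)) ⊕ Val := fun n =>
    if hn : TShape (f n) (f (n+1)) then
      Sum.inl (Classical.choose (hTpair n hn))
    else Sum.inr (Classical.choose (hMvict n hn)) with hg
  have hkey : ∀ k m, k < m → g k ≠ g m := by
    intro k m hlt hge
    by_cases hk : TShape (f k) (f (k+1)) <;> by_cases hm : TShape (f m) (f (m+1))
    · have e1 : g k = Sum.inl (Classical.choose (hTpair k hk)) := dif_pos hk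
      have e2 : g m = Sum.inl (Classical.choose (hTpair m hm)) := dif_pos hm
      rw [e1, e2] at hge
      have hk1 := (Classical.choose_spec (hTpair k hk)).1
      have hm1 := (Classical.choose_spec (hTpair m hm)).1
      apply hm1.2.1
      rw [← Sum.inl.inj hge]
      exact hFm (k+1) m hlt hk1.2.2.1
    · have e1 : g k = Sum.inl (Classical.choose (hTpair k hk)) := dif_pos hk
      have e2 : g m = Sum.inr (Classical.choose (hMvict m hm)) := dif_neg hm
      rw [e1, e2] at hge
      exact Sum.inl_ne_inr hge
    · have e1 : g k = Sum.inr (Classical.choose (hMvict k hk)) := dif_neg hk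
      have e2 : g m = Sum.inl (Classical.choose (hTpair m hm)) := dif_pos hm
      rw [e1, e2] at hge
      exact Sum.inr_ne_inl hge
    · have e1 : g k = Sum.inr (Classical.choose (hMvict k hk)) := dif_neg hk
      have e2 : g m = Sum.inr (Classical.choose (hMvict m hm)) := dif_neg hm
      rw [e1, e2] at hge
      have hk1 := Classical.choose_spec (hMvict k hk)
      have hm1 := Classical.choose_spec (hMvict m hm)
      have hdead : Classical.choose (hMvict k hk) ∈ (f m).Dead :=
        hDm (k+1) m hlt hk1.2
      rw [Sum.inr.inj hge] at hdead
      exact (f m).hDead _ hdead hm1.1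
  have hginj : Function.Injective g := by
    intro k m hge
    by_contra hne
    rcases Nat.lt_or_ge k m with hc | hc
    · exact hkey k m hc hge
    · exact hkey m k (by omega) hge.symm
  have hrange : Set.range g ⊆
      (Sum.inl '' PairSet M Ever) ∪ (Sum.inr '' Ever) := by
    rintro x ⟨n, rfl⟩
    by_cases hn : TShape (f n) (f (n+1))
    · have e1 : g n = Sum.inl (Classical.choose (hTpair n hn)) := dif_pos hn
      rw [e1]
      have h1 := (Classical.choose_spec (hTpair n hn)).1
      refine Or.inl ⟨_, ⟨h1.1, ?_, h1.2.2.2.2⟩, rfl⟩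
      intro x hx
      exact Set.mem_iUnion.mpr ⟨n, h1.2.2.2.1 x hx⟩
    · have e1 : g n = Sum.inr (Classical.choose (hMvict n hn)) := dif_neg hn
      rw [e1]
      have h1 := Classical.choose_spec (hMvict n hn)
      exact Or.inr ⟨_, Set.mem_iUnion.mpr ⟨n, h1.1⟩, rfl⟩
  have hfinr : (Set.range g).Finite :=
    (((pairSet_finite hEverfin).image _).union (hEverfin.image _)).subset hrange
  exact Set.infinite_range_of_injective hginj hfinr

end VVCount

section VVAssemble
open Classical
variable {M : MVSetting} {I : Inst M.S}

/-- Dependency chase steps on states. -/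
def DStepR (s s' : St M I) : Prop := CoreStep s s' ∧ depStepTo M.deps s.J s'.J

/-- MV-enhanced chase steps on states. -/
def BStepR (s s' : St M I) : Prop := CoreStep s s' ∧ M.mvStep (some s.J) (some s'.J)

lemma termA_sat {N : ℕ} (hbd : ∀ (p : Pos M.S) (n : ℕ), CountPath M.deps n p → n ≤ N)
    (hVB : M.ValidBase I) (s : St M I) (hterm : ∀ s', ¬ DStepR s s') :
    s.J.satisfiesAll M.deps := by
  intro d hd
  cases d with
  | tgd σ =>
    intro ν hbody
    by_contra hviol
    obtain ⟨s', hT, hstep⟩ := buildT hbd hVB s hd hbody hviol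
    exact hterm s' ⟨Or.inl hT, Or.inl ⟨σ, hd, hstep⟩⟩
  | egd σ =>
    intro ν hbody
    by_contra hne
    obtain ⟨s', hM, hstep⟩ := buildE hVB s hd hbody hne
    exact hterm s' ⟨Or.inr hM, Or.inr ⟨σ, hd, hstep⟩⟩

lemma termB_empty {N : ℕ} (hbd : ∀ (p : Pos M.S) (n : ℕ), CountPath M.deps n p → n ≤ N)
    (hVB : M.ValidBase I) (s : St M I) (hterm : ∀ s', ¬ BStepR s s') :
    M.mvChaseSteps (some s.J) = ∅ := by
  rw [Set.eq_empty_iff_forall_notMem]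
  intro C hC
  rcases hC with ⟨σ, hσ, J', ⟨h, hb, hviol, _⟩, _⟩ | ⟨σ, hσ, J', ⟨h, hb, hne, _⟩, _⟩ |
    ⟨σ, hσ, ⟨h, hb, hne, hlc, hrc⟩, _⟩ | ⟨v, hempty, ⟨h, hb⟩, _⟩ |
    ⟨v, hne, har, h, hb, hdiff, _⟩
  · obtain ⟨s', hT, hstep'⟩ := buildT hbd hVB s hσ hb hviol
    exact hterm s' ⟨Or.inl hT, dep_mvStep (Or.inl ⟨σ, hσ, hstep'⟩)⟩
  · obtain ⟨s', hM, hstep'⟩ := buildE hVB s hσ hb hne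
    exact hterm s' ⟨Or.inr hM, dep_mvStep (Or.inr ⟨σ, hσ, hstep'⟩)⟩
  · have heq := (hVB.2.1 (Dep.egd σ) hσ) _ (s.transfer hb)
    obtain ⟨c, hc⟩ := hlc
    obtain ⟨d', hd'⟩ := hrc
    rw [hc, hd', s.homc, s.homc] at heq
    rw [hc, hd'] at hne
    exact hne heq
  · have hmem : (fun i => ((M.views.defn v).head i).eval (fun x => s.hom (h x))) ∈
        (M.views.defn v).answer I := ⟨fun x => s.hom (h x), s.transfer hb, rfl⟩
    rw [hVB.2.2 v, hempty] at hmem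
    exact hmem
  · obtain ⟨s', hM, hstep'⟩ := buildG hVB s hne har hb hdiff
    exact hterm s' ⟨Or.inr hM, hstep'⟩

/-- Construction of a pre-solution with a homomorphism to the valid base instance. -/
lemma exists_preSolution (hVB : M.ValidBase I) :
    ∃ (J0 : Inst M.S) (ρ0 : Val → Val), M.IsPreSolution J0 ∧ J0.facts.Finite ∧
      (∀ c, ρ0 (Val.const c) = Val.const c) ∧
      (∀ p ∈ J0.facts,
        (⟨p.1, fun i => ρ0 (p.2 i)⟩ : (r : M.S.rel) × (Fin (M.S.arity r) → Val)) ∈ I.facts) := by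
  classical
  haveI : Finite M.views.idx := M.views.finite
  haveI : Finite M.views.schema.rel := M.views.finite
  haveI : Finite ↥M.mv.facts := M.mvFinite.to_subtype
  obtain ⟨e, einj⟩ := exists_injective_nat ↥M.mv.facts
  -- the valuation witnessing each fact of MV in I
  set Fμ : ((v : M.views.idx) × (Fin (M.views.arity v) → Val)) → (ℕ → Val) := fun p =>
    if h : p.2 ∈ (M.views.defn p.1).answer I then Classical.choose h
    else fun _ => Val.const 0 with hFμ
  have hμ : ∀ (v : M.views.idx) (t : Fin (M.views.arity v) → Val), t ∈ M.mv.rels v →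
      BodyHolds (Fμ ⟨v, t⟩) (M.views.defn v).body I ∧
        t = fun i => ((M.views.defn v).head i).eval (Fμ ⟨v, t⟩) := by
    intro v t ht
    have hans : t ∈ (M.views.defn v).answer I := by rw [hVB.2.2 v]; exact ht
    have he : Fμ ⟨v, t⟩ = Classical.choose hans := dif_pos hans
    rw [he]
    obtain ⟨h1, h2⟩ := Classical.choose_spec hans
    exact ⟨h1, h2⟩
  set code : (v : M.views.idx) → (Fin (M.views.arity v) → Val) → ℕ := fun v t =>
    if h : (⟨v, t⟩ : (v : M.views.idx) × (Fin (M.views.arity v) → Val)) ∈ M.mv.facts then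
      e ⟨⟨v, t⟩, h⟩ else 0 with hcode
  set ν : (v : M.views.idx) → (Fin (M.views.arity v) → Val) → ℕ → Val := fun v t x =>
    if hx : ∃ i, (M.views.defn v).head i = Term.var x then t (Classical.choose hx)
    else Val.null (Nat.pair (code v t) x) with hν
  have hteq : ∀ (v : M.views.idx) (t : Fin (M.views.arity v) → Val), t ∈ M.mv.rels v →
      ∀ (x : ℕ) (j : Fin (M.views.arity v)), (M.views.defn v).head j = Term.var x →
      t j = Fμ ⟨v, t⟩ x := by
    intro v t ht x j hj
    have h2 := congrFun (hμ v t ht).2 j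
    rw [h2, hj]
    rfl
  have hνhead : ∀ (v : M.views.idx) (t : Fin (M.views.arity v) → Val), t ∈ M.mv.rels v →
      ∀ i, ((M.views.defn v).head i).eval (ν v t) = t i := by
    intro v t ht i
    cases hterm : (M.views.defn v).head i with
    | const c =>
      have h2 := congrFun (hμ v t ht).2 i
      rw [h2, hterm]
      rfl
    | var x =>
      show (Term.var x).eval (ν v t) = t i
      have hx : ∃ j, (M.views.defn v).head j = Term.var x := ⟨i, hterm⟩
      have he : ν v t x = t (Classical.choose hx) := dif_pos hx
      show ν v t x = t i
      rw [he, hteq v t ht x _ (Classical.choose_spec hx), hteq v t ht x i hterm]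
  set J0 : Inst M.S := Inst.ofFacts (⋃ v, ⋃ t ∈ M.mv.rels v,
    factSet (M.views.defn v).body (ν v t)) with hJ0
  -- decode map
  set ρ0 : Val → Val := fun a => match a with
    | Val.const c => Val.const c
    | Val.null m =>
      if h : ∃ p : ↥M.mv.facts × ℕ, m = Nat.pair (e p.1) p.2 then
        Fμ (Classical.choose h).1.1 (Classical.choose h).2
      else Val.null m
    with hρ0
  have hρ0c : ∀ c, ρ0 (Val.const c) = Val.const c := fun c => rfl
  have hdecode : ∀ (v : M.views.idx) (t : Fin (M.views.arity v) → Val)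
      (ht : t ∈ M.mv.rels v) (x : ℕ),
      ρ0 (Val.null (Nat.pair (code v t) x)) = Fμ ⟨v, t⟩ x := by
    intro v t ht x
    have hmem : (⟨v, t⟩ : (v : M.views.idx) × (Fin (M.views.arity v) → Val)) ∈
      M.mv.facts := ht
    have hcd : code v t = e ⟨⟨v, t⟩, hmem⟩ := dif_pos hmem
    have hex : ∃ p : ↥M.mv.facts × ℕ,
        Nat.pair (code v t) x = Nat.pair (e p.1) p.2 :=
      ⟨(⟨⟨v, t⟩, hmem⟩, x), by rw [hcd]⟩
    have he : ρ0 (Val.null (Nat.pair (code v t) x)) =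
        Fμ (Classical.choose hex).1.1 (Classical.choose hex).2 := dif_pos hex
    have hsp' : Nat.pair (e ⟨⟨v, t⟩, hmem⟩) x =
        Nat.pair (e (Classical.choose hex).1) (Classical.choose hex).2 := by
      rw [← hcd]; exact Classical.choose_spec hex
    rw [Nat.pair_eq_pair] at hsp'
    have h1 : (Classical.choose hex).1 = (⟨⟨v, t⟩, hmem⟩ : ↥M.mv.facts) :=
      (einj hsp'.1).symm
    have h2 : (Classical.choose hex).1.1 = (⟨v, t⟩ :
        (r : M.views.schema.rel) × (Fin (M.views.schema.arity r) → Val)) :=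
      congrArg Subtype.val h1
    rw [he, h2, ← hsp'.2]
  -- the homomorphism property
  have hhomf : ∀ p ∈ J0.facts,
      (⟨p.1, fun i => ρ0 (p.2 i)⟩ : (r : M.S.rel) × (Fin (M.S.arity r) → Val)) ∈ I.facts := by
    intro p hp
    obtain ⟨sv, ⟨v, rfl⟩, hp⟩ := hp
    obtain ⟨st, ⟨t, rfl⟩, hp⟩ := hp
    simp only [Set.mem_iUnion] at hp
    obtain ⟨ht, hp⟩ := hp
    obtain ⟨A, hA, hpe⟩ := hp
    have hpe' : p = (⟨A.rel, fun i => (A.args i).eval (ν v t)⟩ :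
      (r : M.S.rel) × (Fin (M.S.arity r) → Val)) := hpe
    subst hpe'
    have heq : (fun i => ρ0 ((A.args i).eval (ν v t))) =
        fun i => (A.args i).eval (Fμ ⟨v, t⟩) := by
      funext i
      cases hu : A.args i with
      | const c => rfl
      | var x =>
        show ρ0 (ν v t x) = Fμ ⟨v, t⟩ x
        by_cases hx : ∃ j, (M.views.defn v).head j = Term.var x
        · have he : ν v t x = t (Classical.choose hx) := dif_pos hx
          have h1 : t (Classical.choose hx) = Fμ ⟨v, t⟩ x :=
            hteq v t ht x _ (Classical.choose_spec hx)
          obtain ⟨c, hc⟩ := M.mvGround v t ht (Classical.choose hx)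
          rw [he, hc, hρ0c, ← hc, h1]
        · have he : ν v t x = Val.null (Nat.pair (code v t) x) := dif_neg hx
          rw [he, hdecode v t ht x]
    show (⟨A.rel, fun i => ρ0 ((A.args i).eval (ν v t))⟩ :
      (r : M.S.rel) × (Fin (M.S.arity r) → Val)) ∈ I.facts
    rw [heq]
    exact (hμ v t ht).1 A hA
  refine ⟨J0, ρ0, ⟨ν, ?_, ?_, ?_, rfl⟩, ?_, hρ0c, hhomf⟩
  · exact hνhead
  · intro v t ht x _ hx
    exact ⟨Nat.pair (code v t) x, dif_neg hx⟩
  · intro v v' t t' x x' ht ht' _ hx _ hx' heq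
    have h1 : ν v t x = Val.null (Nat.pair (code v t) x) := dif_neg hx
    have h2 : ν v' t' x' = Val.null (Nat.pair (code v' t') x') := dif_neg hx'
    rw [h1, h2] at heq
    have h3 : Nat.pair (code v t) x = Nat.pair (code v' t') x' := by injection heq
    rw [Nat.pair_eq_pair] at h3
    have hm1 : (⟨v, t⟩ : (v : M.views.idx) × (Fin (M.views.arity v) → Val)) ∈
      M.mv.facts := ht
    have hm2 : (⟨v', t'⟩ : (v : M.views.idx) × (Fin (M.views.arity v) → Val)) ∈
      M.mv.facts := ht'
    have hc1 : code v t = e ⟨⟨v, t⟩, hm1⟩ := dif_pos hm1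
    have hc2 : code v' t' = e ⟨⟨v', t'⟩, hm2⟩ := dif_pos hm2
    rw [hc1, hc2] at h3
    have h4 : (⟨⟨v, t⟩, hm1⟩ : ↥M.mv.facts) = ⟨⟨v', t'⟩, hm2⟩ := einj h3.1
    have h5 : (⟨v, t⟩ : (v : M.views.idx) × (Fin (M.views.arity v) → Val)) = ⟨v', t'⟩ :=
      congrArg Subtype.val h4
    obtain ⟨h6, h7⟩ := Sigma.mk.inj_iff.mp h5
    exact ⟨h6, h7, h3.2⟩
  · -- finiteness
    refine Set.finite_iUnion fun v => ?_
    have hrels : (M.mv.rels v).Finite := by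
      have hinj : Set.InjOn (Sigma.mk v) (Sigma.mk v ⁻¹' M.mv.facts) :=
        fun a _ b _ hab => sigma_mk_injective hab
      exact Set.Finite.preimage (f := Sigma.mk v) (s := M.mv.facts) hinj M.mvFinite
    exact hrels.biUnion fun t _ => factSet_finite _ _

/-- The initial chase state. -/
lemma exists_initSt (hVB : M.ValidBase I) :
    ∃ s0 : St M I, M.IsPreSolution s0.J := by
  classical
  obtain ⟨J0, ρ0, hpre, hfin, hρc, hρf⟩ := exists_preSolution hVB
  obtain ⟨U0, hU0⟩ := exists_null_bound (adom_finite hfin)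
  refine ⟨⟨J0, ρ0, U0, ∅, fun _ => 0, ∅, hfin, hρc, hρf, ?_, ?_, ?_, fun _ => rfl, ?_, ?_⟩, hpre⟩
  · intro n hn
    exact ⟨hU0 n hn, Set.notMem_empty _, fun pr hpr => absurd hpr (Set.notMem_empty _)⟩
  · intro d hd
    exact absurd hd (Set.notMem_empty _)
  · intro d hd
    exact absurd hd (Set.notMem_empty _)
  · intro p hp j
    exact Nat.zero_le _
  · intro pr hpr
    exact absurd hpr (Set.notMem_empty _)

end VVAssemble


theorem vv_solution_hom_to_valid_base (M : MVSetting) (hwa : WeaklyAcyclic M.deps)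
    (I : Inst M.S) (hI : M.ValidBase I) :
    ∃ J, M.IsVVSolution J ∧ InstHom J I := by
  classical
  obtain ⟨N, hbd⟩ := countPath_bound M.deps M.depsFinite hwa
  obtain ⟨s0, hpre⟩ := exists_initSt hI
  obtain ⟨sA, hRA, htA⟩ := exists_terminal (DStepR (M := M) (I := I)) s0
    (fun f _ hst => no_infinite_core hbd f (fun n => (hst n).1))
  obtain ⟨sB, hRB, htB⟩ := exists_terminal (BStepR (M := M) (I := I)) sA
    (fun f _ hst => no_infinite_core hbd f (fun n => (hst n).1))
  refine ⟨sB.J, ⟨sA.J, ⟨s0.J, hpre, ?_, termA_sat hbd hI sA htA⟩, ?_,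
    termB_empty hbd hI sB htB⟩, sB.hom, sB.homc, sB.homf⟩
  · exact hRA.lift St.J (fun a b (hab : DStepR a b) => hab.2)
  · exact hRB.lift (fun s : St M I => some s.J) (fun a b (hab : BStepR a b) => hab.2)

end CertainViews
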